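/- arXiv:1404.6829 — 4 statements merged into one kernel-verified Lean document; each statement's English description precedes it below -/
import Mathlib

section
/- Let φ and ψ be non-constant relatively prime inner functions on the unit disc (every common inner divisor of φ and ψ is constant). If f is a star-cyclic vector of Q_φ, then M_ψ*f is also a star-cyclic vector of Q_φ. -/
open scoped ComplexConjugate

noncomputable section

namespace Rudin

/-- The open unit disc in `ℂ`. -/
def disc : Set ℂ := Metric.ball 0 1

/-- The Hardy space `H²(𝔻)`, modeled as the space of square-summable
power-series coefficient sequences. -/
abbrev H2 : Type := lp (fun _ : ℕ => ℂ) 2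

/-- Evaluation of an element of `H²(𝔻)` as a holomorphic function on the disc. -/
def H2.eval (f : H2) (z : ℂ) : ℂ := ∑' m : ℕ, (f : ℕ → ℂ) m * z ^ m

/-- `T` is the operator of multiplication by the function `φ` on `H²(𝔻)`. -/
def IsMulOp (φ : ℂ → ℂ) (T : H2 →L[ℂ] H2) : Prop :=
  ∀ f : H2, ∀ z ∈ disc, H2.eval (T f) z = φ z * H2.eval f z

/-- `φ` is an inner function: bounded holomorphic on `𝔻`, multiplication by `φ`
maps `H²(𝔻)` into itself and is an isometry. -/
structure IsInner (φ : ℂ → ℂ) : Prop where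
  diff : DifferentiableOn ℂ φ disc
  bdd : ∃ C : ℝ, ∀ z ∈ disc, ‖φ z‖ ≤ C
  mul_mem : ∀ h : H2, ∃ g : H2, ∀ z ∈ disc, H2.eval g z = φ z * H2.eval h z
  isom : ∀ h g : H2, (∀ z ∈ disc, H2.eval g z = φ z * H2.eval h z) → ‖g‖ = ‖h‖

/-- Divisibility of inner functions: `ψ = φ · θ` with `θ` inner. -/
def InnerDvd (φ ψ : ℂ → ℂ) : Prop :=
  ∃ θ : ℂ → ℂ, IsInner θ ∧ ∀ z ∈ disc, ψ z = φ z * θ z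

/-- The subset `φ H²(𝔻)` of `H²(𝔻)`. -/
def shiftedSet (φ : ℂ → ℂ) : Set H2 :=
  {g | ∃ h : H2, ∀ z ∈ disc, H2.eval g z = φ z * H2.eval h z}

/-- The quotient module `Q_φ = H²(𝔻) ⊖ φ H²(𝔻)`. -/
def Qsp (φ : ℂ → ℂ) : Submodule ℂ H2 := (Submodule.span ℂ (shiftedSet φ))ᗮ

/-- The Blaschke factor at `a ∈ 𝔻`. -/
def blaschke (a z : ℂ) : ℂ := (z - a) / (1 - conj a * z)

/-- The smallest closed subspace of `H²(𝔻)` containing `f` and invariant under `Mz*`. -/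
def starHull (Mz : H2 →L[ℂ] H2) (f : H2) : Submodule ℂ H2 :=
  sInf {K : Submodule ℂ H2 | IsClosed (K : Set H2) ∧ f ∈ K ∧
    ∀ x ∈ K, ContinuousLinearMap.adjoint Mz x ∈ K}

/-- `f` is a star-cyclic vector of the quotient module `Q`. -/
def StarCyclic (Mz : H2 →L[ℂ] H2) (Q : Submodule ℂ H2) (f : H2) : Prop :=
  f ∈ Q ∧ starHull Mz f = Q

end Rudin

open scoped ComplexConjugate InnerProductSpace ENNReal NNReal
open Rudin

namespace RudinAux

local notation "⟪" x ", " y "⟫" => @inner ℂ _ _ x y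

lemma norm_coeff_le (f : H2) (n : ℕ) : ‖(f : ℕ → ℂ) n‖ ≤ ‖f‖ :=
  lp.norm_apply_le_norm (by norm_num) f n

lemma summable_pow (f : H2) {z : ℂ} (hz : ‖z‖ < 1) :
    Summable (fun n => (f : ℕ → ℂ) n * z ^ n) := by
  apply Summable.of_norm
  apply Summable.of_nonneg_of_le (fun n => norm_nonneg _)
    (fun n => ?_) (Summable.mul_left ‖f‖ (summable_geometric_of_lt_one (norm_nonneg z) hz))
  rw [norm_mul, norm_pow]
  exact mul_le_mul_of_nonneg_right (norm_coeff_le f n)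
    (pow_nonneg (norm_nonneg z) n)

lemma memℓp_kern {z : ℂ} (hz : ‖z‖ < 1) :
    Memℓp (fun n : ℕ => (conj z) ^ n) 2 := by
  apply memℓp_gen
  have : ∀ n : ℕ, ‖(conj z) ^ n‖ ^ (2 : ℝ≥0∞).toReal = (‖z‖ ^ 2) ^ n := by
    intro n
    rw [ENNReal.toReal_ofNat, show ((2:ℝ)) = ((2:ℕ):ℝ) by norm_num, Real.rpow_natCast,
      norm_pow, RCLike.norm_conj, ← pow_mul, pow_mul']
  rw [funext this]
  exact summable_geometric_of_lt_one (by positivity)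
    (by nlinarith [norm_nonneg z])

/-- The reproducing kernel at `z`. -/
def kern (z : ℂ) : H2 :=
  if h : ‖z‖ < 1 then ⟨fun n : ℕ => (conj z) ^ n, memℓp_kern h⟩ else 0

lemma kern_apply {z : ℂ} (hz : ‖z‖ < 1) (n : ℕ) :
    (kern z : ℕ → ℂ) n = (conj z) ^ n := by
  unfold kern
  rw [dif_pos hz]

lemma inner_kern (f : H2) {z : ℂ} (hz : ‖z‖ < 1) :
    ⟪kern z, f⟫ = H2.eval f z := by
  rw [lp.inner_eq_tsum, H2.eval]
  apply tsum_congr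
  intro n
  rw [kern_apply hz]
  simp [mul_comm]

end RudinAux

namespace RudinAux

open FormalMultilinearSeries

lemma mem_disc_iff {z : ℂ} : z ∈ disc ↔ ‖z‖ < 1 := by
  simp [disc, Metric.mem_ball, Complex.dist_eq]

lemma hasFPowerSeries (f : H2) :
    HasFPowerSeriesOnBall (H2.eval f) (ofScalars ℂ (f : ℕ → ℂ)) 0 1 := by
  constructor
  · apply ENNReal.le_of_forall_nnreal_lt
    intro r hr
    apply FormalMultilinearSeries.le_radius_of_bound _ ‖f‖
    intro n
    rw [ofScalars_norm]
    calc ‖(f : ℕ → ℂ) n‖ * (r:ℝ) ^ n ≤ ‖f‖ * 1 := by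
          apply mul_le_mul (norm_coeff_le f n) (pow_le_one₀ r.coe_nonneg ?_)
            (by positivity) (norm_nonneg f)
          exact_mod_cast hr.le
      _ = ‖f‖ := mul_one _
  · norm_num
  · intro y hy
    rw [EMetric.mem_ball, edist_zero_right] at hy
    have hy' : ‖y‖ < 1 := by rwa [← ofReal_norm, ENNReal.ofReal_lt_one] at hy
    have : ∀ n, (ofScalars ℂ (f : ℕ → ℂ) n fun _ => y) = (f : ℕ → ℂ) n * y ^ n := by
      intro n
      rw [ofScalars_apply_eq, smul_eq_mul]
    rw [funext this, zero_add]
    exact (summable_pow f hy').hasSum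

lemma analyticOnNhd (f : H2) : AnalyticOnNhd ℂ (H2.eval f) disc := by
  intro z hz
  apply (hasFPowerSeries f).analyticAt_of_mem
  rw [EMetric.mem_ball, edist_zero_right]
  rw [← ofReal_norm, ENNReal.ofReal_lt_one]
  exact mem_disc_iff.mp hz

lemma eval_eq_zero (f : H2) (h : ∀ z ∈ disc, H2.eval f z = 0) : f = 0 := by
  have h0 : HasFPowerSeriesAt (H2.eval f) (ofScalars ℂ (f : ℕ → ℂ)) 0 :=
    (hasFPowerSeries f).hasFPowerSeriesAt
  have hz : (ofScalars ℂ (f : ℕ → ℂ) : FormalMultilinearSeries ℂ ℂ ℂ) = 0 := by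
    apply h0.eq_zero_of_eventually
    filter_upwards [Metric.ball_mem_nhds (0:ℂ) one_pos] with z hz
    exact h z hz
  have : (f : ℕ → ℂ) = 0 := by
    rwa [ofScalars_series_eq_zero] at hz
  apply lp.ext
  rw [lp.coeFn_zero]
  exact this

lemma eval_sub (f g : H2) {z : ℂ} (hz : z ∈ disc) :
    H2.eval (f - g) z = H2.eval f z - H2.eval g z := by
  have hz' := mem_disc_iff.mp hz
  rw [← inner_kern _ hz', ← inner_kern _ hz', ← inner_kern _ hz', inner_sub_right]

lemma eval_smul (c : ℂ) (f : H2) {z : ℂ} (hz : z ∈ disc) :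
    H2.eval (c • f) z = c * H2.eval f z := by
  have hz' := mem_disc_iff.mp hz
  rw [← inner_kern _ hz', ← inner_kern _ hz', inner_smul_right]

lemma eval_add (f g : H2) {z : ℂ} (hz : z ∈ disc) :
    H2.eval (f + g) z = H2.eval f z + H2.eval g z := by
  have hz' := mem_disc_iff.mp hz
  rw [← inner_kern _ hz', ← inner_kern _ hz', ← inner_kern _ hz', inner_add_right]

lemma eval_inj {f g : H2} (h : ∀ z ∈ disc, H2.eval f z = H2.eval g z) : f = g := by
  have h0 : f - g = 0 := by
    apply eval_eq_zero
    intro z hz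
    rw [eval_sub f g hz, h z hz, sub_self]
  rw [← sub_eq_zero]
  exact h0

end RudinAux

namespace RudinAux

lemma isOpen_disc : IsOpen disc := Metric.isOpen_ball

lemma preconnected_disc : IsPreconnected disc := (convex_ball (0:ℂ) 1).isPreconnected

lemma cancel {h F G : ℂ → ℂ} (hh : AnalyticOnNhd ℂ h disc) (hF : AnalyticOnNhd ℂ F disc)
    (hG : AnalyticOnNhd ℂ G disc) {z₀ : ℂ} (hz₀ : z₀ ∈ disc) (h₀ : h z₀ ≠ 0)
    (heq : ∀ z ∈ disc, h z * F z = h z * G z) : ∀ z ∈ disc, F z = G z := by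
  have hU : IsOpen (disc ∩ h ⁻¹' {(0:ℂ)}ᶜ) :=
    hh.continuousOn.isOpen_inter_preimage isOpen_disc isOpen_compl_singleton
  have hz₀U : z₀ ∈ disc ∩ h ⁻¹' {(0:ℂ)}ᶜ := ⟨hz₀, by simpa using h₀⟩
  have hev : F =ᶠ[nhds z₀] G := by
    filter_upwards [hU.mem_nhds hz₀U] with z hz
    exact mul_left_cancel₀ (by simpa using hz.2) (heq z hz.1)
  exact fun z hz =>
    hF.eqOn_of_preconnected_of_eventuallyEq hG preconnected_disc hz₀ hev hz

lemma exists_eval_ne_zero {f : H2} (hf : f ≠ 0) : ∃ z ∈ disc, H2.eval f z ≠ 0 := by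
  by_contra h
  push_neg at h
  exact hf (eval_eq_zero f h)

end RudinAux

namespace RudinAux

def shiftFun (f : ℕ → ℂ) : ℕ → ℂ := fun n => Nat.casesOn n 0 f

lemma memℓp_shift (f : H2) : Memℓp (shiftFun (f : ℕ → ℂ)) 2 := by
  apply memℓp_gen
  rw [← summable_nat_add_iff 1]
  have : (fun n => ‖shiftFun (f : ℕ → ℂ) (n + 1)‖ ^ (2 : ℝ≥0∞).toReal)
      = fun n => ‖(f : ℕ → ℂ) n‖ ^ (2 : ℝ≥0∞).toReal := rfl
  rw [this]
  exact (lp.memℓp f).summable (by norm_num)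

def shiftElem (f : H2) : H2 := ⟨shiftFun (f : ℕ → ℂ), memℓp_shift f⟩

lemma shiftElem_apply_zero (f : H2) : (shiftElem f : ℕ → ℂ) 0 = 0 := rfl

lemma shiftElem_apply_succ (f : H2) (n : ℕ) :
    (shiftElem f : ℕ → ℂ) (n + 1) = (f : ℕ → ℂ) n := rfl

lemma hasSum_shift {M : Type*} [AddCommMonoid M] [TopologicalSpace M] {g : ℕ → M} {a : M} (h0 : g 0 = 0)
    (hs : HasSum (fun n => g (n + 1)) a) : HasSum g a := by
  have hinj : Function.Injective (fun n : ℕ => n + 1) := fun a b h => by simpa using h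
  refine (Function.Injective.hasSum_iff hinj ?_).mp hs
  intro x hx
  match x with
  | 0 => exact h0
  | n + 1 => exact absurd ⟨n, rfl⟩ hx

lemma eval_shiftElem (f : H2) {z : ℂ} (hz : z ∈ disc) :
    H2.eval (shiftElem f) z = z * H2.eval f z := by
  have hz' := mem_disc_iff.mp hz
  have hs : HasSum (fun n => (f : ℕ → ℂ) n * z ^ (n + 1)) (z * H2.eval f z) := by
    have := (summable_pow f hz').hasSum.mul_left z
    convert this using 2 with n
    · rfl
    · ring
    · rfl
  have : HasSum (fun n => (shiftElem f : ℕ → ℂ) n * z ^ n) (z * H2.eval f z) :=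
    hasSum_shift (by simp [shiftElem_apply_zero]) hs
  exact this.tsum_eq

section Mz
variable {Mz : H2 →L[ℂ] H2} (hMz : IsMulOp (fun z => z) Mz)
include hMz

lemma Mz_eq_shiftElem (f : H2) : Mz f = shiftElem f := by
  apply eval_inj
  intro z hz
  rw [hMz f z hz, eval_shiftElem f hz]

set_option maxHeartbeats 1000000 in
lemma Mz_norm (f : H2) : ‖Mz f‖ = ‖f‖ := by
  have ht : (0:ℝ) < (2 : ℝ≥0∞).toReal := by norm_num
  rw [lp.norm_eq_tsum_rpow ht (Mz f), lp.norm_eq_tsum_rpow ht f]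
  congr 1
  have hs : HasSum (fun n => ‖(Mz f : ℕ → ℂ) (n + 1)‖ ^ (2 : ℝ≥0∞).toReal)
      (∑' i, ‖(f : ℕ → ℂ) i‖ ^ (2 : ℝ≥0∞).toReal) := by
    have h1 : (fun n => ‖(Mz f : ℕ → ℂ) (n + 1)‖ ^ (2 : ℝ≥0∞).toReal)
        = fun n => ‖(f : ℕ → ℂ) n‖ ^ (2 : ℝ≥0∞).toReal := by
      funext n
      rw [Mz_eq_shiftElem hMz f, shiftElem_apply_succ]
    rw [h1]
    exact ((lp.memℓp f).summable (by norm_num)).hasSum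
  refine (hasSum_shift ?_ hs).tsum_eq
  rw [Mz_eq_shiftElem hMz f, shiftElem_apply_zero]
  simp [Real.zero_rpow (ne_of_gt ht)]

/-- `Mz` as a linear isometry. -/
def MzIso : H2 →ₗᵢ[ℂ] H2 := ⟨Mz.toLinearMap, Mz_norm hMz⟩

lemma MzIso_apply (f : H2) : MzIso hMz f = Mz f := rfl

lemma Mz_inner (f g : H2) : @inner ℂ _ _ (Mz f) (Mz g) = @inner ℂ _ _ f g := by
  rw [← MzIso_apply hMz f, ← MzIso_apply hMz g]
  exact (MzIso hMz).inner_map_map f g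

lemma Mz_pow_inner (n : ℕ) (f g : H2) :
    @inner ℂ _ _ ((Mz ^ n) f) ((Mz ^ n) g) = @inner ℂ _ _ f g := by
  induction n with
  | zero => simp
  | succ n ih =>
    rw [pow_succ', ContinuousLinearMap.mul_apply, ContinuousLinearMap.mul_apply,
      Mz_inner hMz]
    exact ih

lemma eval_Mz_pow (n : ℕ) (f : H2) {z : ℂ} (hz : z ∈ disc) :
    H2.eval ((Mz ^ n) f) z = z ^ n * H2.eval f z := by
  induction n with
  | zero => simp
  | succ n ih =>
    rw [pow_succ', ContinuousLinearMap.mul_apply, hMz _ z hz, ih]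
    ring

lemma Mz_pow_coeff (n : ℕ) (f : H2) : ∀ k < n, ((Mz ^ n) f : ℕ → ℂ) k = 0 := by
  induction n with
  | zero => intro k hk; omega
  | succ n ih =>
    intro k hk
    rw [pow_succ', ContinuousLinearMap.mul_apply, Mz_eq_shiftElem hMz]
    match k with
    | 0 => exact shiftElem_apply_zero _
    | j + 1 =>
      rw [shiftElem_apply_succ]
      exact ih j (by omega)

lemma eq_zero_of_mem_pow {f : H2} (h : ∀ n : ℕ, ∃ g : H2, f = (Mz ^ n) g) : f = 0 := by
  apply lp.ext
  rw [lp.coeFn_zero]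
  funext k
  obtain ⟨g, hg⟩ := h (k + 1)
  rw [hg]
  exact Mz_pow_coeff hMz (k + 1) g k (by omega)

end Mz

end RudinAux

namespace RudinAux

section InnerOp
variable {φ : ℂ → ℂ} (hφ : IsInner φ)

/-- The multiplication-by-`φ` map, for `φ` inner. -/
def mulFun (h : H2) : H2 := Classical.choose (hφ.mul_mem h)

lemma mulFun_spec (h : H2) : ∀ z ∈ disc, H2.eval (mulFun hφ h) z = φ z * H2.eval h z :=
  Classical.choose_spec (hφ.mul_mem h)

lemma mulFun_norm (h : H2) : ‖mulFun hφ h‖ = ‖h‖ := hφ.isom h _ (mulFun_spec hφ h)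

/-- The multiplication-by-`φ` operator as a linear isometry. -/
def op : H2 →ₗᵢ[ℂ] H2 where
  toFun := mulFun hφ
  map_add' f g := by
    apply eval_inj
    intro z hz
    rw [eval_add _ _ hz, mulFun_spec hφ _ z hz, mulFun_spec hφ _ z hz,
      mulFun_spec hφ _ z hz, eval_add _ _ hz]
    ring
  map_smul' c f := by
    apply eval_inj
    intro z hz
    rw [mulFun_spec hφ _ z hz]
    simp only [RingHom.id_apply]
    rw [eval_smul _ _ hz, eval_smul _ _ hz, mulFun_spec hφ _ z hz]
    ring
  norm_map' := mulFun_norm hφ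

lemma op_spec (h : H2) : ∀ z ∈ disc, H2.eval (op hφ h) z = φ z * H2.eval h z :=
  mulFun_spec hφ h

lemma op_unique {g h : H2} (hg : ∀ z ∈ disc, H2.eval g z = φ z * H2.eval h z) :
    g = op hφ h := by
  apply eval_inj
  intro z hz
  rw [hg z hz, op_spec hφ h z hz]

/-- The range `φ H²` as a submodule. -/
def mulRange : Submodule ℂ H2 := LinearMap.range (op hφ).toLinearMap

lemma mem_mulRange {g : H2} : g ∈ mulRange hφ ↔ ∃ h : H2, op hφ h = g := Iff.rfl

lemma shiftedSet_eq : shiftedSet φ = (mulRange hφ : Set H2) := by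
  ext g
  constructor
  · rintro ⟨h, hev⟩
    exact ⟨h, (op_unique hφ hev).symm⟩
  · rintro ⟨h, rfl⟩
    exact ⟨h, op_spec hφ h⟩

lemma span_shiftedSet : Submodule.span ℂ (shiftedSet φ) = mulRange hφ := by
  rw [shiftedSet_eq hφ]
  exact Submodule.span_eq _

lemma mulRange_closed : IsClosed (mulRange hφ : Set H2) := by
  have : (mulRange hφ : Set H2) = Set.range (op hφ) := by
    ext g; exact Iff.rfl
  rw [this]
  exact (op hφ).isometry.isClosedEmbedding.isClosed_range

lemma Qsp_eq : Qsp φ = (mulRange hφ)ᗮ := by rw [Qsp, span_shiftedSet hφ]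

lemma Qsp_orth : (Qsp φ)ᗮ = mulRange hφ := by
  rw [Qsp_eq hφ]
  haveI : CompleteSpace (mulRange hφ) := (mulRange_closed hφ).completeSpace_coe
  exact Submodule.orthogonal_orthogonal _

lemma mem_Qsp_iff {x : H2} :
    x ∈ Qsp φ ↔ ∀ h : H2, @inner ℂ _ _ (op hφ h) x = 0 := by
  rw [Qsp_eq hφ, Submodule.mem_orthogonal]
  constructor
  · intro H h; exact H _ ⟨h, rfl⟩
  · rintro H y ⟨h, rfl⟩; exact H h

end InnerOp

end RudinAux

namespace RudinAux

local notation "⟪" x ", " y "⟫" => @inner ℂ _ _ x y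

section Wandering

variable {Mz : H2 →L[ℂ] H2} {N : Submodule ℂ H2} {w : H2}

lemma pow_mem (hNi : ∀ x ∈ N, Mz x ∈ N) (n : ℕ) {x : H2} (hx : x ∈ N) : (Mz ^ n) x ∈ N := by
  induction n with
  | zero => simpa using hx
  | succ n ih =>
    rw [pow_succ', ContinuousLinearMap.mul_apply]
    exact hNi _ ih

lemma map_Mz_closed (hMz : IsMulOp (fun z => z) Mz) (hNc : IsClosed (N : Set H2)) :
    IsClosed ((Submodule.map (Mz : H2 →ₗ[ℂ] H2) N : Submodule ℂ H2) : Set H2) := by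
  have h1 : ((Submodule.map (Mz : H2 →ₗ[ℂ] H2) N : Submodule ℂ H2) : Set H2) = Mz '' (N : Set H2) := by
    ext x; simp [Submodule.mem_map]
  rw [h1]
  exact ((MzIso hMz).isometry.isClosedEmbedding.isClosedMap) _ hNc

lemma vec_orthonormal (hMz : IsMulOp (fun z => z) Mz) (hNi : ∀ x ∈ N, Mz x ∈ N)
    (hwN : w ∈ N) (hw1 : ‖w‖ = 1) (hwp : ∀ x ∈ N, ⟪w, Mz x⟫ = 0) :
    Orthonormal ℂ (fun n : ℕ => (Mz ^ n) w) := by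
  rw [orthonormal_iff_ite]
  have key : ∀ i d : ℕ, ⟪(Mz ^ i) w, (Mz ^ (i + d)) w⟫ = if d = 0 then 1 else 0 := by
    intro i d
    have h1 : (Mz ^ (i + d)) w = (Mz ^ i) ((Mz ^ d) w) := by
      rw [pow_add, ContinuousLinearMap.mul_apply]
    rw [h1, Mz_pow_inner hMz]
    match d with
    | 0 =>
      simp only [pow_zero, ContinuousLinearMap.one_apply, if_pos rfl]
      rw [@inner_self_eq_norm_sq_to_K ℂ, hw1]
      norm_num
    | s + 1 =>
      rw [if_neg (by omega)]
      have h2 : (Mz ^ (s + 1)) w = Mz ((Mz ^ s) w) := by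
        rw [pow_succ', ContinuousLinearMap.mul_apply]
      rw [h2]
      exact hwp _ (pow_mem hNi s hwN)
  intro i j
  rcases le_or_gt i j with h | h
  · obtain ⟨d, rfl⟩ := Nat.exists_eq_add_of_le h
    rw [key i d]
    by_cases hd : d = 0 <;> simp [hd]
  · obtain ⟨d, rfl⟩ := Nat.exists_eq_add_of_le h.le
    have hd : d ≠ 0 := by omega
    rw [← inner_conj_symm, key j d, if_neg hd, map_zero, if_neg (by omega)]

/-- The isometry `H² → H²`, `f ↦ (eval w) · f`, built from the wandering vector `w`. -/
def Vop (hv : Orthonormal ℂ (fun n : ℕ => (Mz ^ n) w)) : H2 →ₗᵢ[ℂ] H2 :=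
  hv.orthogonalFamily.linearIsometry

variable (hv : Orthonormal ℂ (fun n : ℕ => (Mz ^ n) w))

lemma Vop_hasSum (f : H2) :
    HasSum (fun n => (f : ℕ → ℂ) n • (Mz ^ n) w) (Vop hv f) :=
  hv.orthogonalFamily.hasSum_linearIsometry f

lemma eval_Vop (hMz : IsMulOp (fun z => z) Mz) (f : H2) {z : ℂ} (hz : z ∈ disc) :
    H2.eval (Vop hv f) z = H2.eval w z * H2.eval f z := by
  have hz' := mem_disc_iff.mp hz
  have h1 : HasSum (fun n => ⟪kern z, (f : ℕ → ℂ) n • (Mz ^ n) w⟫) ⟪kern z, Vop hv f⟫ :=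
    (Vop_hasSum hv f).mapL (innerSL ℂ (kern z))
  have h2 : (fun n => ⟪kern z, (f : ℕ → ℂ) n • (Mz ^ n) w⟫)
      = fun n => (H2.eval w z) * ((f : ℕ → ℂ) n * z ^ n) := by
    funext n
    rw [inner_smul_right, inner_kern _ hz', eval_Mz_pow hMz n w hz]
    ring
  rw [h2] at h1
  have h3 : HasSum (fun n => (H2.eval w z) * ((f : ℕ → ℂ) n * z ^ n))
      (H2.eval w z * H2.eval f z) := (summable_pow f hz').hasSum.mul_left _
  rw [← inner_kern _ hz']
  exact h1.unique h3

lemma Vop_mem (hNc : IsClosed (N : Set H2)) (hNi : ∀ x ∈ N, Mz x ∈ N) (hwN : w ∈ N)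
    (f : H2) : Vop hv f ∈ N := by
  have h1 : Vop hv f ∈ closure (N : Set H2) := by
    refine mem_closure_of_tendsto (Vop_hasSum hv f) (Filter.Eventually.of_forall ?_)
    intro s
    exact Submodule.sum_mem N fun n _ => Submodule.smul_mem N _ (pow_mem hNi n hwN)
  rwa [hNc.closure_eq] at h1

lemma inner_vec_Vop (f : H2) (n : ℕ) :
    ⟪(Mz ^ n) w, Vop hv f⟫ = (f : ℕ → ℂ) n := by
  classical
  have h1 : HasSum (fun i => ⟪(Mz ^ n) w, (f : ℕ → ℂ) i • (Mz ^ i) w⟫)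
      ⟪(Mz ^ n) w, Vop hv f⟫ :=
    (Vop_hasSum hv f).mapL (innerSL ℂ ((Mz ^ n) w))
  have h2 : (fun i => ⟪(Mz ^ n) w, (f : ℕ → ℂ) i • (Mz ^ i) w⟫)
      = fun i => if i = n then (f : ℕ → ℂ) n else 0 := by
    funext i
    rw [inner_smul_right, orthonormal_iff_ite.mp hv n i]
    rcases eq_or_ne i n with rfl | hne
    · rw [if_pos rfl, if_pos rfl, mul_one]
    · rw [if_neg (fun h => hne h.symm), if_neg hne, mul_zero]
  rw [h2] at h1
  exact h1.unique (hasSum_ite_eq n _)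

end Wandering

end RudinAux

namespace RudinAux

local notation "⟪" x ", " y "⟫" => @inner ℂ _ _ x y

section Beurling

variable {Mz : H2 →L[ℂ] H2} {N : Submodule ℂ H2} {w w' : H2}

lemma cross_orthogonal (hv : Orthonormal ℂ (fun n : ℕ => (Mz ^ n) w))
    (hv' : Orthonormal ℂ (fun n : ℕ => (Mz ^ n) w'))
    (hcross : ∀ i j : ℕ, ⟪(Mz ^ i) w, (Mz ^ j) w'⟫ = 0) (f g : H2) :
    ⟪Vop hv f, Vop hv' g⟫ = 0 := by
  have inner_vec : ∀ j : ℕ, ⟪(Mz ^ j) w', Vop hv f⟫ = 0 := by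
    intro j
    have h1 : HasSum (fun i => ⟪(Mz ^ j) w', (f : ℕ → ℂ) i • (Mz ^ i) w⟫)
        ⟪(Mz ^ j) w', Vop hv f⟫ :=
      (Vop_hasSum hv f).mapL (innerSL ℂ ((Mz ^ j) w'))
    have h2 : (fun i => ⟪(Mz ^ j) w', (f : ℕ → ℂ) i • (Mz ^ i) w⟫) = fun _ => (0 : ℂ) := by
      funext i
      rw [inner_smul_right, ← inner_conj_symm, hcross i j, map_zero, mul_zero]
    rw [h2] at h1
    exact h1.unique hasSum_zero
  have h1 : HasSum (fun j => ⟪Vop hv f, (g : ℕ → ℂ) j • (Mz ^ j) w'⟫)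
      ⟪Vop hv f, Vop hv' g⟫ :=
    (Vop_hasSum hv' g).mapL (innerSL ℂ (Vop hv f))
  have h2 : (fun j => ⟪Vop hv f, (g : ℕ → ℂ) j • (Mz ^ j) w'⟫) = fun _ => (0 : ℂ) := by
    funext j
    rw [inner_smul_right, ← inner_conj_symm, inner_vec j, map_zero, mul_zero]
  rw [h2] at h1
  exact h1.unique hasSum_zero

/-- The wandering subspace is one-dimensional: a wandering vector orthogonal to `w`
vanishes. -/
lemma wandering_unique (hMz : IsMulOp (fun z => z) Mz) (hNi : ∀ x ∈ N, Mz x ∈ N)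
    (hwN : w ∈ N) (hw1 : ‖w‖ = 1) (hwp : ∀ x ∈ N, ⟪w, Mz x⟫ = 0)
    {x : H2} (hxN : x ∈ N) (hxw : ⟪w, x⟫ = 0) (hxp : ∀ y ∈ N, ⟪x, Mz y⟫ = 0) :
    x = 0 := by
  by_contra hx0
  set w2 : H2 := ((‖x‖ : ℂ))⁻¹ • x with hw2def
  have hxnorm : ‖x‖ ≠ 0 := fun h => hx0 (norm_eq_zero.mp h)
  have hw21 : ‖w2‖ = 1 := by
    rw [hw2def, norm_smul]
    simp [inv_mul_cancel₀ hxnorm]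
  have hw2N : w2 ∈ N := Submodule.smul_mem N _ hxN
  have hw2p : ∀ y ∈ N, ⟪w2, Mz y⟫ = 0 := by
    intro y hy
    rw [hw2def, inner_smul_left, hxp y hy, mul_zero]
  have hv := vec_orthonormal hMz hNi hwN hw1 hwp
  have hv2 := vec_orthonormal hMz hNi hw2N hw21 hw2p
  have hcross : ∀ i j : ℕ, ⟪(Mz ^ i) w, (Mz ^ j) w2⟫ = 0 := by
    intro i j
    rcases le_or_gt i j with h | h
    · obtain ⟨d, rfl⟩ := Nat.exists_eq_add_of_le h
      have h1 : (Mz ^ (i + d)) w2 = (Mz ^ i) ((Mz ^ d) w2) := by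
        rw [pow_add, ContinuousLinearMap.mul_apply]
      rw [h1, Mz_pow_inner hMz]
      match d with
      | 0 =>
        simp only [pow_zero, ContinuousLinearMap.one_apply]
        rw [hw2def, inner_smul_right, hxw, mul_zero]
      | s + 1 =>
        have h2 : (Mz ^ (s + 1)) w2 = Mz ((Mz ^ s) w2) := by
          rw [pow_succ', ContinuousLinearMap.mul_apply]
        rw [h2]
        exact hwp _ (pow_mem hNi s hw2N)
    · obtain ⟨d, hd⟩ := Nat.exists_eq_add_of_le h.le
      have hdpos : d ≠ 0 := by omega
      subst hd
      have h1 : (Mz ^ (j + d)) w = (Mz ^ j) ((Mz ^ d) w) := by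
        rw [pow_add, ContinuousLinearMap.mul_apply]
      rw [h1, Mz_pow_inner hMz, ← inner_conj_symm]
      match d, hdpos with
      | s + 1, _ =>
        have h2 : (Mz ^ (s + 1)) w = Mz ((Mz ^ s) w) := by
          rw [pow_succ', ContinuousLinearMap.mul_apply]
        rw [h2, hw2p _ (pow_mem hNi s hwN), map_zero]
  have hq : Vop hv w2 = Vop hv2 w := by
    apply eval_inj
    intro z hz
    rw [eval_Vop hv hMz w2 hz, eval_Vop hv2 hMz w hz]
    ring
  have h0 : ⟪Vop hv w2, Vop hv2 w⟫ = 0 := cross_orthogonal hv hv2 hcross w2 w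
  rw [← hq, @inner_self_eq_norm_sq_to_K ℂ, LinearIsometry.norm_map, hw21] at h0
  norm_num at h0

/-- Wold-type completeness: an element of `N` orthogonal to all `Mzⁿ w` vanishes. -/
lemma wold (hMz : IsMulOp (fun z => z) Mz) (hNc : IsClosed (N : Set H2))
    (hNi : ∀ x ∈ N, Mz x ∈ N) (hwN : w ∈ N) (hw1 : ‖w‖ = 1)
    (hwp : ∀ x ∈ N, ⟪w, Mz x⟫ = 0)
    {x : H2} (hxN : x ∈ N) (ho : ∀ n : ℕ, ⟪(Mz ^ n) w, x⟫ = 0) : x = 0 := by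
  have key : ∀ n : ℕ, ∃ y, y ∈ N ∧ x = (Mz ^ n) y ∧ ∀ k : ℕ, ⟪(Mz ^ k) w, y⟫ = 0 := by
    intro n
    induction n with
    | zero => exact ⟨x, hxN, by simp, ho⟩
    | succ n ih =>
      obtain ⟨y, hyN, hxy, hyo⟩ := ih
      set SN : Submodule ℂ H2 := Submodule.map (Mz : H2 →ₗ[ℂ] H2) N with hSNdef
      haveI : CompleteSpace SN := (map_Mz_closed hMz hNc).completeSpace_coe
      set p : H2 := (SN.orthogonalProjection y : H2) with hpdef
      have hpSN : p ∈ SN := (SN.orthogonalProjection y).2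
      have hrperp : y - p ∈ SNᗮ := SN.sub_starProjection_mem_orthogonal y
      have hSNleN : SN ≤ N := by
        rintro _ ⟨t, htN, rfl⟩
        exact hNi t htN
      have hrN : y - p ∈ N := Submodule.sub_mem N hyN (hSNleN hpSN)
      have hrw : ⟪w, y - p⟫ = 0 := by
        rw [inner_sub_right]
        have h1 : ⟪w, y⟫ = 0 := by
          have := hyo 0
          simpa using this
        obtain ⟨t, htN, hpt⟩ := hpSN
        simp only [ContinuousLinearMap.coe_coe] at hpt
        rw [h1, ← hpt, hwp t htN, sub_zero]
      have hrp : ∀ u ∈ N, ⟪y - p, Mz u⟫ = 0 := by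
        intro u hu
        have h1 : Mz u ∈ SN := ⟨u, hu, rfl⟩
        rw [← inner_conj_symm, hrperp (Mz u) h1, map_zero]
      have hr0 : y - p = 0 := wandering_unique hMz hNi hwN hw1 hwp hrN hrw hrp
      have hyp : y = p := by rwa [sub_eq_zero] at hr0
      obtain ⟨y', hy'N, hy'⟩ := hpSN
      simp only [ContinuousLinearMap.coe_coe] at hy'
      refine ⟨y', hy'N, ?_, ?_⟩
      · rw [hxy, hyp, ← hy', pow_succ, ContinuousLinearMap.mul_apply]
      · intro k
        have h1 : ⟪(Mz ^ k) w, y'⟫ = ⟪Mz ((Mz ^ k) w), Mz y'⟫ := (Mz_inner hMz _ _).symm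
        rw [h1, hy']
        have h2 : Mz ((Mz ^ k) w) = (Mz ^ (k + 1)) w := by
          rw [pow_succ', ContinuousLinearMap.mul_apply]
        rw [h2, ← hyp]
        exact hyo (k + 1)
  apply eq_zero_of_mem_pow hMz
  intro n
  obtain ⟨y, _, hxy, _⟩ := key n
  exact ⟨y, hxy⟩

/-- Beurling: every element of `N` is in the range of `Vop`. -/
lemma mem_range_Vop (hMz : IsMulOp (fun z => z) Mz) (hNc : IsClosed (N : Set H2))
    (hNi : ∀ x ∈ N, Mz x ∈ N) (hwN : w ∈ N) (hw1 : ‖w‖ = 1)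
    (hwp : ∀ x ∈ N, ⟪w, Mz x⟫ = 0) (hv : Orthonormal ℂ (fun n : ℕ => (Mz ^ n) w))
    {x : H2} (hxN : x ∈ N) : ∃ c : H2, Vop hv c = x := by
  have hmem : Memℓp (fun n : ℕ => ⟪(Mz ^ n) w, x⟫) 2 := by
    apply memℓp_gen' (C := ‖x‖ ^ 2)
    intro s
    have h1 : ∀ i : ℕ, ‖⟪(Mz ^ i) w, x⟫‖ ^ (2 : ℝ≥0∞).toReal = ‖⟪(Mz ^ i) w, x⟫‖ ^ (2:ℕ) := by
      intro i
      rw [ENNReal.toReal_ofNat, show ((2:ℝ)) = ((2:ℕ):ℝ) by norm_num, Real.rpow_natCast]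
    calc ∑ i ∈ s, ‖⟪(Mz ^ i) w, x⟫‖ ^ (2 : ℝ≥0∞).toReal
        = ∑ i ∈ s, ‖⟪(Mz ^ i) w, x⟫‖ ^ (2:ℕ) := by
          apply Finset.sum_congr rfl; intro i _; exact h1 i
      _ ≤ ‖x‖ ^ 2 := hv.sum_inner_products_le x
  set c : H2 := ⟨fun n : ℕ => ⟪(Mz ^ n) w, x⟫, hmem⟩ with hcdef
  have hcapp : ∀ n : ℕ, (c : ℕ → ℂ) n = ⟪(Mz ^ n) w, x⟫ := fun n => rfl
  have hy : x - Vop hv c = 0 := by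
    apply wold hMz hNc hNi hwN hw1 hwp
      (Submodule.sub_mem N hxN (Vop_mem hv hNc hNi hwN c))
    intro n
    rw [inner_sub_right, inner_vec_Vop hv c n, hcapp n, sub_self]
  refine ⟨c, ?_⟩
  rw [← sub_eq_zero, ← neg_sub, neg_eq_zero]
  exact hy

end Beurling

end RudinAux

namespace RudinAux

local notation "⟪" x ", " y "⟫" => @inner ℂ _ _ x y

lemma eval_zero_fn {z : ℂ} : H2.eval (0 : H2) z = 0 := by
  simp [H2.eval]

/-- The constant function `1` as an element of `H²`. -/
def e0 : H2 := lp.single 2 0 1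

lemma eval_single {n : ℕ} {a : ℂ} {z : ℂ} (hz : z ∈ disc) :
    H2.eval (lp.single 2 n a) z = a * z ^ n := by
  have hz' := mem_disc_iff.mp hz
  rw [← inner_kern _ hz', lp.inner_single_right]
  rw [kern_apply hz']
  simp [RCLike.inner_apply, mul_comm]

lemma eval_e0 {z : ℂ} (hz : z ∈ disc) : H2.eval e0 z = 1 := by
  rw [e0, eval_single hz, pow_zero, mul_one]

lemma norm_e0 : ‖e0‖ = 1 := by
  have h1 : ⟪e0, e0⟫ = 1 := by
    rw [e0, lp.inner_single_left]
    have : (lp.single 2 0 1 : H2) 0 = (1 : ℂ) := by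
      rw [lp.single_apply]
      simp
    rw [this]
    simp [RCLike.inner_apply]
  have h2 := @inner_self_eq_norm_sq ℂ _ _ _ _ e0
  rw [h1] at h2
  simp only [RCLike.one_re] at h2
  nlinarith [norm_nonneg e0]

lemma kern_ne_zero {z : ℂ} (hz : ‖z‖ < 1) : (kern z : H2) ≠ 0 := by
  intro h
  have h1 : (kern z : ℕ → ℂ) 0 = 1 := by rw [kern_apply hz]; simp
  rw [h, lp.coeFn_zero] at h1
  simp at h1

/-- A function that multiplies `H²` into itself isometrically is inner. -/
lemma isInner_of (η : ℂ → ℂ)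
    (H : ∀ h : H2, ∃ g : H2, (∀ z ∈ disc, H2.eval g z = η z * H2.eval h z) ∧ ‖g‖ = ‖h‖) :
    IsInner η := by
  constructor
  · -- diff
    obtain ⟨g, hg, -⟩ := H e0
    have hcongr : ∀ z ∈ disc, η z = H2.eval g z := by
      intro z hz
      rw [hg z hz, eval_e0 hz, mul_one]
    exact (((analyticOnNhd g).differentiableOn).congr hcongr)
  · -- bdd
    refine ⟨1, fun z hz => ?_⟩
    have hz' := mem_disc_iff.mp hz
    obtain ⟨g, hg, hn⟩ := H (kern z)
    have h1 : H2.eval g z = η z * H2.eval (kern z) z := hg z hz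
    have h2 : H2.eval (kern z) z = ⟪kern z, kern z⟫ := (inner_kern _ hz').symm
    have h3 : ‖H2.eval g z‖ ≤ ‖kern z‖ * ‖kern z‖ := by
      rw [← inner_kern _ hz']
      calc ‖⟪kern z, g⟫‖ ≤ ‖kern z‖ * ‖g‖ := norm_inner_le_norm _ _
        _ = ‖kern z‖ * ‖kern z‖ := by rw [hn]
    have h4 : ⟪kern z, kern z⟫ = ((‖kern z‖ : ℂ)) ^ 2 := @inner_self_eq_norm_sq_to_K ℂ _ _ _ _ _
    have h5 : ‖H2.eval g z‖ = ‖η z‖ * ‖kern z‖ ^ 2 := by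
      rw [h1, h2, h4, norm_mul]
      congr 1
      rw [norm_pow]
      simp
    have h6 : (0:ℝ) < ‖kern z‖ := norm_pos_iff.mpr (kern_ne_zero hz')
    have h7 : ‖η z‖ * ‖kern z‖ ^ 2 ≤ 1 * ‖kern z‖ ^ 2 := by
      rw [one_mul, ← h5, pow_two]
      exact h3
    exact le_of_mul_le_mul_right h7 (pow_pos h6 2)
  · -- mul_mem
    intro h
    obtain ⟨g, hg, -⟩ := H h
    exact ⟨g, hg⟩
  · -- isom
    intro h g hg
    obtain ⟨g', hg', hn⟩ := H h
    have : g = g' := by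
      apply eval_inj
      intro z hz
      rw [hg z hz, hg' z hz]
    rw [this]
    exact hn

lemma Mpsi_norm {ψ : ℂ → ℂ} {Mψ : H2 →L[ℂ] H2} (hψ : IsInner ψ) (hMψ : IsMulOp ψ Mψ)
    (x : H2) : ‖Mψ x‖ = ‖x‖ := hψ.isom x (Mψ x) (hMψ x)

section ExistsWandering

variable {Mz : H2 →L[ℂ] H2} {N : Submodule ℂ H2}

lemma exists_wandering (hMz : IsMulOp (fun z => z) Mz) (hNc : IsClosed (N : Set H2))
    (hNi : ∀ x ∈ N, Mz x ∈ N) {x₀ : H2} (hx₀ : x₀ ∈ N) (hx₀0 : x₀ ≠ 0) :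
    ∃ w, w ∈ N ∧ ‖w‖ = 1 ∧ ∀ x ∈ N, ⟪w, Mz x⟫ = 0 := by
  set SN : Submodule ℂ H2 := Submodule.map (Mz : H2 →ₗ[ℂ] H2) N with hSNdef
  haveI : CompleteSpace SN := (map_Mz_closed hMz hNc).completeSpace_coe
  by_cases hW : ∃ u, u ∈ N ∧ u ∉ SN
  · obtain ⟨u, huN, huSN⟩ := hW
    set r : H2 := u - (SN.orthogonalProjection u : H2) with hrdef
    have hrperp : r ∈ SNᗮ := SN.sub_starProjection_mem_orthogonal u
    have hSNleN : SN ≤ N := by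
      rintro _ ⟨t, htN, rfl⟩
      exact hNi t htN
    have hrN : r ∈ N := Submodule.sub_mem N huN (hSNleN (SN.orthogonalProjection u).2)
    have hr0 : r ≠ 0 := by
      intro h
      apply huSN
      have : u = (SN.orthogonalProjection u : H2) := by rwa [hrdef, sub_eq_zero] at h
      rw [this]
      exact (SN.orthogonalProjection u).2
    have hrnorm : ‖r‖ ≠ 0 := fun h => hr0 (norm_eq_zero.mp h)
    refine ⟨((‖r‖ : ℂ))⁻¹ • r, Submodule.smul_mem N _ hrN, ?_, ?_⟩
    · rw [norm_smul]
      simp [inv_mul_cancel₀ hrnorm]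
    · intro x hx
      rw [inner_smul_left]
      have h1 : Mz x ∈ SN := ⟨x, hx, rfl⟩
      rw [← inner_conj_symm, hrperp (Mz x) h1]
      simp
  · exfalso
    push_neg at hW
    apply hx₀0
    have hall : ∀ x ∈ N, ∃ y, y ∈ N ∧ x = Mz y := by
      intro x hx
      obtain ⟨y, hyN, hyx⟩ := hW x hx
      exact ⟨y, hyN, hyx.symm⟩
    have key : ∀ n : ℕ, ∀ x ∈ N, ∃ y ∈ N, x = (Mz ^ n) y := by
      intro n
      induction n with
      | zero => exact fun x hx => ⟨x, hx, by simp⟩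
      | succ n ih =>
        intro x hx
        obtain ⟨y, hyN, hxy⟩ := ih x hx
        obtain ⟨y', hy'N, hyy'⟩ := hall y hyN
        refine ⟨y', hy'N, ?_⟩
        rw [hxy, hyy', pow_succ, ContinuousLinearMap.mul_apply]
    apply eq_zero_of_mem_pow hMz
    intro n
    obtain ⟨y, -, hy⟩ := key n x₀ hx₀
    exact ⟨y, hy⟩

end ExistsWandering

end RudinAux

namespace RudinAux

local notation "⟪" x ", " y "⟫" => @inner ℂ _ _ x y

section KeyL

variable {φ ψ : ℂ → ℂ} {Mz Mψ : H2 →L[ℂ] H2}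

/-- Commutation: `Mψ` composed with multiplication by an inner `φ`. -/
lemma Mpsi_op_comm (hφ : IsInner φ) (hMψ : IsMulOp ψ Mψ) (h : H2) :
    Mψ (op hφ h) = op hφ (Mψ h) := by
  apply op_unique
  intro z hz
  rw [hMψ _ z hz, op_spec hφ h z hz, hMψ _ z hz]
  ring

/-- Main cancellation lemma: if `g ⊥ φH²` and `ψ g ∈ φH²` with `φ, ψ` relatively prime
inner functions, then `g = 0`. -/
lemma keyL (hφ : IsInner φ) (hψ : IsInner ψ)
    (hφnc : ∃ z ∈ disc, ∃ w ∈ disc, φ z ≠ φ w)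
    (hrp : ∀ r : ℂ → ℂ, IsInner r → InnerDvd r φ → InnerDvd r ψ →
      ∀ z ∈ disc, ∀ w ∈ disc, r z = r w)
    (hMz : IsMulOp (fun z => z) Mz) (hMψ : IsMulOp ψ Mψ)
    {g : H2} (hgQ : g ∈ Qsp φ) (hgR : Mψ g ∈ mulRange hφ) : g = 0 := by
  -- a point where φ does not vanish
  obtain ⟨z₁, hz₁, hφz₁⟩ : ∃ z₁ ∈ disc, φ z₁ ≠ 0 := by
    obtain ⟨z, hz, w, hw, hne⟩ := hφnc
    by_cases h : φ z = 0
    · exact ⟨w, hw, fun hw0 => hne (by rw [h, hw0])⟩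
    · exact ⟨z, hz, h⟩
  have hφan : AnalyticOnNhd ℂ φ disc := hφ.diff.analyticOnNhd isOpen_disc
  have hψan : AnalyticOnNhd ℂ ψ disc := hψ.diff.analyticOnNhd isOpen_disc
  -- the invariant subspace N = Mψ⁻¹(φ H²)
  set N : Submodule ℂ H2 := Submodule.comap (Mψ : H2 →ₗ[ℂ] H2) (mulRange hφ) with hNdef
  have hNc : IsClosed (N : Set H2) := by
    have h1 : (N : Set H2) = Mψ ⁻¹' (mulRange hφ : Set H2) := rfl
    rw [h1]
    exact (mulRange_closed hφ).preimage Mψ.continuous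
  have hNi : ∀ x ∈ N, Mz x ∈ N := by
    intro x hx
    obtain ⟨h, hh⟩ := (mem_mulRange hφ).mp (Submodule.mem_comap.mp hx)
    simp only [ContinuousLinearMap.coe_coe] at hh
    have : Mψ (Mz x) = op hφ (Mz h) := by
      apply op_unique
      intro z hz
      have hb : ∀ y : H2, H2.eval (Mz y) z = z * H2.eval y z := fun y => hMz y z hz
      calc H2.eval (Mψ (Mz x)) z = ψ z * H2.eval (Mz x) z := hMψ _ z hz
        _ = ψ z * (z * H2.eval x z) := by rw [hb x]
        _ = z * (ψ z * H2.eval x z) := by ring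
        _ = z * H2.eval (Mψ x) z := by rw [hMψ x z hz]
        _ = z * H2.eval (op hφ h) z := by rw [hh]
        _ = z * (φ z * H2.eval h z) := by rw [op_spec hφ h z hz]
        _ = φ z * (z * H2.eval h z) := by ring
        _ = φ z * H2.eval (Mz h) z := by rw [hb h]
    exact Submodule.mem_comap.mpr ((mem_mulRange hφ).mpr ⟨Mz h, this.symm⟩)
  -- φ itself (as an element of H²) belongs to N
  set φhat : H2 := op hφ e0 with hφhatdef
  have eval_φhat : ∀ z ∈ disc, H2.eval φhat z = φ z := by
    intro z hz
    rw [hφhatdef, op_spec hφ e0 z hz, eval_e0 hz, mul_one]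
  have hφhatN : φhat ∈ N :=
    Submodule.mem_comap.mpr ((mem_mulRange hφ).mpr ⟨Mψ e0, (Mpsi_op_comm hφ hMψ e0).symm⟩)
  have hφhat0 : φhat ≠ 0 := by
    intro h0
    apply hφz₁
    rw [← eval_φhat z₁ hz₁, h0, eval_zero_fn]
  -- the wandering vector w and the associated isometry
  obtain ⟨w, hwN, hw1, hwp⟩ := exists_wandering hMz hNc hNi hφhatN hφhat0
  have hv := vec_orthonormal hMz hNi hwN hw1 hwp
  have hw0 : w ≠ 0 := by
    intro h
    rw [h, norm_zero] at hw1
    norm_num at hw1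
  obtain ⟨z₀, hz₀, hwz₀⟩ := exists_eval_ne_zero hw0
  -- θ = eval w is inner
  have θinner : IsInner (H2.eval w) := by
    apply isInner_of
    intro h
    exact ⟨Vop hv h, fun z hz => eval_Vop hv hMz h hz, (Vop hv).norm_map h⟩
  -- u : the quotient φ / θ
  obtain ⟨u, hu⟩ := mem_range_Vop hMz hNc hNi hwN hw1 hwp hv hφhatN
  have hφfact : ∀ z ∈ disc, φ z = H2.eval w z * H2.eval u z := by
    intro z hz
    rw [← eval_φhat z hz, ← hu, eval_Vop hv hMz u hz]
  -- η = eval u is inner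
  have ηinner : IsInner (H2.eval u) := by
    apply isInner_of
    intro h
    have hmem : op hφ h ∈ N := ⟨Mψ h, (Mpsi_op_comm hφ hMψ h).symm⟩
    obtain ⟨uh, huh⟩ := mem_range_Vop hMz hNc hNi hwN hw1 hwp hv hmem
    refine ⟨uh, ?_, ?_⟩
    · apply cancel (analyticOnNhd w) (analyticOnNhd uh)
        ((analyticOnNhd u).mul (analyticOnNhd h)) hz₀ hwz₀
      intro z hz
      have h1 : H2.eval w z * H2.eval uh z = H2.eval (op hφ h) z := by
        rw [← huh, eval_Vop hv hMz uh hz]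
      rw [h1, op_spec hφ h z hz, hφfact z hz]
      ring
    · calc ‖uh‖ = ‖Vop hv uh‖ := ((Vop hv).norm_map uh).symm
        _ = ‖op hφ h‖ := by rw [huh]
        _ = ‖h‖ := (op hφ).norm_map h
  -- v : the quotient ψθ / φ
  obtain ⟨v, hvEq⟩ := (mem_mulRange hφ).mp (Submodule.mem_comap.mp hwN)
  simp only [ContinuousLinearMap.coe_coe] at hvEq
  have hψwfact : ∀ z ∈ disc, ψ z * H2.eval w z = φ z * H2.eval v z := by
    intro z hz
    rw [← hMψ w z hz, ← hvEq, op_spec hφ v z hz]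
  -- κ = eval v is inner
  have κinner : IsInner (H2.eval v) := by
    apply isInner_of
    intro h
    have h1 : Vop hv h ∈ N := Vop_mem hv hNc hNi hwN h
    obtain ⟨gh, hgh⟩ := (mem_mulRange hφ).mp (Submodule.mem_comap.mp h1)
    simp only [ContinuousLinearMap.coe_coe] at hgh
    refine ⟨gh, ?_, ?_⟩
    · apply cancel hφan (analyticOnNhd gh)
        ((analyticOnNhd v).mul (analyticOnNhd h)) hz₁ hφz₁
      intro z hz
      have h2 : φ z * H2.eval gh z = H2.eval (Mψ (Vop hv h)) z := by
        rw [← hgh, op_spec hφ gh z hz]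
      rw [h2, hMψ _ z hz, eval_Vop hv hMz h hz, ← mul_assoc, hψwfact z hz]
      ring
    · calc ‖gh‖ = ‖op hφ gh‖ := ((op hφ).norm_map gh).symm
        _ = ‖Mψ (Vop hv h)‖ := by rw [hgh]
        _ = ‖Vop hv h‖ := Mpsi_norm hψ hMψ _
        _ = ‖h‖ := (Vop hv).norm_map h
  -- ψ = η κ
  have hψfact : ∀ z ∈ disc, ψ z = H2.eval u z * H2.eval v z := by
    apply cancel (analyticOnNhd w) hψan
      ((analyticOnNhd u).mul (analyticOnNhd v)) hz₀ hwz₀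
    intro z hz
    have h1 : H2.eval w z * ψ z = ψ z * H2.eval w z := by ring
    rw [h1, hψwfact z hz, hφfact z hz]
    ring
  -- η is a common inner divisor, hence constant
  have hconst := hrp (H2.eval u) ηinner
    ⟨H2.eval w, θinner, fun z hz => by rw [hφfact z hz]; ring⟩
    ⟨H2.eval v, κinner, hψfact⟩
  have h0disc : (0 : ℂ) ∈ disc := by
    rw [mem_disc_iff]
    norm_num
  set c : ℂ := H2.eval u 0 with hcdef
  have hc : ∀ z ∈ disc, H2.eval u z = c := fun z hz => hconst z hz 0 h0disc
  have hunorm : ‖u‖ = 1 := by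
    calc ‖u‖ = ‖Vop hv u‖ := ((Vop hv).norm_map u).symm
      _ = ‖op hφ e0‖ := by rw [hu]
      _ = ‖e0‖ := (op hφ).norm_map e0
      _ = 1 := norm_e0
  have hu0 : u ≠ 0 := by
    intro h
    rw [h, norm_zero] at hunorm
    norm_num at hunorm
  have hc0 : c ≠ 0 := by
    intro h
    apply hu0
    apply eval_eq_zero
    intro z hz
    rw [hc z hz, h]
  -- conclude : g lies in φ H² and is orthogonal to it
  have hgN : g ∈ N := Submodule.mem_comap.mpr hgR
  obtain ⟨x, hx⟩ := mem_range_Vop hMz hNc hNi hwN hw1 hwp hv hgN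
  have hgop : g = op hφ (c⁻¹ • x) := by
    apply op_unique
    intro z hz
    rw [← hx, eval_Vop hv hMz x hz, eval_smul _ _ hz, hφfact z hz, hc z hz]
    field_simp
  have hzero : ⟪g, g⟫ = 0 := by
    have h1 := (mem_Qsp_iff hφ).mp hgQ (c⁻¹ • x)
    rw [← hgop] at h1
    exact h1
  exact inner_self_eq_zero.mp hzero

end KeyL

end RudinAux

namespace RudinAux

local notation "⟪" x ", " y "⟫" => @inner ℂ _ _ x y

section Assembly

variable {φ ψ : ℂ → ℂ} {Mz Mψ : H2 →L[ℂ] H2}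

lemma starHull_closed (Mz : H2 →L[ℂ] H2) (x : H2) :
    IsClosed ((starHull Mz x : Submodule ℂ H2) : Set H2) := by
  rw [starHull, Submodule.coe_sInf]
  exact isClosed_biInter (fun K hK => hK.1)

lemma mem_starHull_self (Mz : H2 →L[ℂ] H2) (x : H2) : x ∈ starHull Mz x :=
  Submodule.mem_sInf.mpr fun K hK => hK.2.1

lemma starHull_adjoint_mem (Mz : H2 →L[ℂ] H2) (x : H2) {y : H2} (hy : y ∈ starHull Mz x) :
    ContinuousLinearMap.adjoint Mz y ∈ starHull Mz x :=
  Submodule.mem_sInf.mpr fun K hK => hK.2.2 y (Submodule.mem_sInf.mp hy K hK)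

lemma starHull_le (Mz : H2 →L[ℂ] H2) (x : H2) {K : Submodule ℂ H2}
    (hKc : IsClosed (K : Set H2)) (hx : x ∈ K)
    (hinv : ∀ y ∈ K, ContinuousLinearMap.adjoint Mz y ∈ K) : starHull Mz x ≤ K :=
  sInf_le ⟨hKc, hx, hinv⟩

lemma Qsp_closed (hφ : IsInner φ) : IsClosed ((Qsp φ : Submodule ℂ H2) : Set H2) := by
  rw [Qsp]
  exact Submodule.isClosed_orthogonal _

lemma Mz_op_comm (hφ : IsInner φ) (hMz : IsMulOp (fun z => z) Mz) (h : H2) :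
    Mz (op hφ h) = op hφ (Mz h) := by
  apply op_unique
  intro z hz
  have hb : ∀ y : H2, H2.eval (Mz y) z = z * H2.eval y z := fun y => hMz y z hz
  calc H2.eval (Mz (op hφ h)) z = z * H2.eval (op hφ h) z := hb _
    _ = z * (φ z * H2.eval h z) := by rw [op_spec hφ h z hz]
    _ = φ z * (z * H2.eval h z) := by ring
    _ = φ z * H2.eval (Mz h) z := by rw [hb h]

lemma Qsp_MzStar (hφ : IsInner φ) (hMz : IsMulOp (fun z => z) Mz)
    {x : H2} (hx : x ∈ Qsp φ) : ContinuousLinearMap.adjoint Mz x ∈ Qsp φ := by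
  rw [mem_Qsp_iff hφ]
  intro h
  rw [ContinuousLinearMap.adjoint_inner_right, Mz_op_comm hφ hMz h]
  exact (mem_Qsp_iff hφ).mp hx (Mz h)

lemma Qsp_MψStar (hφ : IsInner φ) (hMψ : IsMulOp ψ Mψ)
    {x : H2} (hx : x ∈ Qsp φ) : ContinuousLinearMap.adjoint Mψ x ∈ Qsp φ := by
  rw [mem_Qsp_iff hφ]
  intro h
  rw [ContinuousLinearMap.adjoint_inner_right, Mpsi_op_comm hφ hMψ h]
  exact (mem_Qsp_iff hφ).mp hx (Mψ h)

end Assembly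

end RudinAux

open Rudin RudinAux in

open Rudin in
/-- Let `φ` and `ψ` be non-constant relatively prime inner functions.
If `f` is a star-cyclic vector of `Q_φ`, then so is `M_ψ* f`. -/
theorem stmt2 (φ ψ : ℂ → ℂ)
    (hφ : IsInner φ) (hψ : IsInner ψ)
    (hφnc : ∃ z ∈ disc, ∃ w ∈ disc, φ z ≠ φ w)
    (hψnc : ∃ z ∈ disc, ∃ w ∈ disc, ψ z ≠ ψ w)
    (hrp : ∀ r : ℂ → ℂ, IsInner r → InnerDvd r φ → InnerDvd r ψ →
      ∀ z ∈ disc, ∀ w ∈ disc, r z = r w)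
    (Mz : H2 →L[ℂ] H2) (hMz : IsMulOp (fun z => z) Mz)
    (Mψ : H2 →L[ℂ] H2) (hMψ : IsMulOp ψ Mψ)
    (f : H2) (hf : StarCyclic Mz (Qsp φ) f) :
    StarCyclic Mz (Qsp φ) (ContinuousLinearMap.adjoint Mψ f) := by
  classical
  obtain ⟨hfQ, hfH⟩ := hf
  set A : H2 →L[ℂ] H2 := ContinuousLinearMap.adjoint Mψ with hAdef
  have hAfQ : A f ∈ Qsp φ := Qsp_MψStar hφ hMψ hfQ
  set K : Submodule ℂ H2 := starHull Mz (A f) with hKdef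
  have hKc : IsClosed (K : Set H2) := starHull_closed Mz (A f)
  have hKQ : K ≤ Qsp φ :=
    starHull_le Mz (A f) (Qsp_closed hφ) hAfQ (fun y hy => Qsp_MzStar hφ hMz hy)
  -- adjoints commute
  have hcomm : ∀ x : H2, A (ContinuousLinearMap.adjoint Mz x)
      = ContinuousLinearMap.adjoint Mz (A x) := by
    have hMzMψ : Mψ.comp Mz = Mz.comp Mψ := by
      apply ContinuousLinearMap.ext
      intro y
      rw [ContinuousLinearMap.comp_apply, ContinuousLinearMap.comp_apply]
      apply eval_inj
      intro z hz
      have hb : ∀ x : H2, H2.eval (Mz x) z = z * H2.eval x z := fun x => hMz x z hz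
      calc H2.eval (Mψ (Mz y)) z = ψ z * H2.eval (Mz y) z := hMψ _ z hz
        _ = ψ z * (z * H2.eval y z) := by rw [hb y]
        _ = z * (ψ z * H2.eval y z) := by ring
        _ = z * H2.eval (Mψ y) z := by rw [hMψ y z hz]
        _ = H2.eval (Mz (Mψ y)) z := (hb _).symm
    have h1 := congrArg ContinuousLinearMap.adjoint hMzMψ
    rw [ContinuousLinearMap.adjoint_comp, ContinuousLinearMap.adjoint_comp] at h1
    intro x
    calc A (ContinuousLinearMap.adjoint Mz x)
        = ((ContinuousLinearMap.adjoint Mψ).comp (ContinuousLinearMap.adjoint Mz)) x := rfl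
      _ = ((ContinuousLinearMap.adjoint Mz).comp (ContinuousLinearMap.adjoint Mψ)) x := by
          rw [← h1]
      _ = ContinuousLinearMap.adjoint Mz (A x) := rfl
  -- Q_φ is mapped into K by A
  have hQK : ∀ x ∈ Qsp φ, A x ∈ K := by
    have hprec : IsClosed ((Submodule.comap (A : H2 →ₗ[ℂ] H2) K : Submodule ℂ H2) : Set H2) :=
      hKc.preimage A.continuous
    have h1 : starHull Mz f ≤ Submodule.comap (A : H2 →ₗ[ℂ] H2) K := by
      apply starHull_le Mz f hprec
      · exact Submodule.mem_comap.mpr (mem_starHull_self Mz (A f))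
      · intro y hy
        rw [Submodule.mem_comap, ContinuousLinearMap.coe_coe, hcomm y]
        exact starHull_adjoint_mem Mz (A f) (Submodule.mem_comap.mp hy)
    intro x hx
    rw [hfH] at h1
    exact Submodule.mem_comap.mp (h1 hx)
  -- Q_φ ≤ K
  have hQleK : Qsp φ ≤ K := by
    intro x hx
    haveI : CompleteSpace K := hKc.completeSpace_coe
    set p : H2 := (K.orthogonalProjection x : H2) with hpdef
    have hpK : p ∈ K := (K.orthogonalProjection x).2
    have hr : x - p ∈ Kᗮ := K.sub_starProjection_mem_orthogonal x
    have hrQ : x - p ∈ Qsp φ := Submodule.sub_mem _ hx (hKQ hpK)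
    have hMψr : Mψ (x - p) ∈ mulRange hφ := by
      rw [← Qsp_orth hφ, Submodule.mem_orthogonal]
      intro u hu
      have h2 : @inner ℂ _ _ (A u) (x - p) = 0 := hr (A u) (hQK u hu)
      rw [← ContinuousLinearMap.adjoint_inner_left]
      exact h2
    have hr0 : x - p = 0 := keyL hφ hψ hφnc hrp hMz hMψ hrQ hMψr
    have hxp : x = p := by rwa [sub_eq_zero] at hr0
    rw [hxp]
    exact hpK
  exact ⟨hAfQ, le_antisymm hKQ hQleK⟩
end
end

section
/- Let T = (T_1, …, T_n) be a commuting tuple of bounded linear operators on a separable complex Hilbert space H, and let Q ⊆ H be a closed subspace invariant under each adjoint T_i*. Then rank(P_Q T_1|_Q, …, P_Q T_n|_Q) ≤ rank(T_1, …, T_n), where P_Q is the orthogonal projection of H onto Q. -/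
noncomputable section

namespace Rudin

/-- `[S]_T`: the smallest closed subspace containing `S` and invariant under every `T i`. -/
def genHull {H : Type*} [NormedAddCommGroup H] [InnerProductSpace ℂ H] {ι : Type*}
    (T : ι → (H →L[ℂ] H)) (S : Set H) : Submodule ℂ H :=
  sInf {K : Submodule ℂ H | IsClosed (K : Set H) ∧ S ⊆ K ∧ ∀ i, ∀ x ∈ K, T i x ∈ K}

/-- The rank of the tuple `T` acting on the (closed, jointly invariant) subspace `Q`:
the least cardinality of a subset `S ⊆ Q` with `[S]_T = Q`. -/
def rankIn {H : Type*} [NormedAddCommGroup H] [InnerProductSpace ℂ H] {ι : Type*}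
    (T : ι → (H →L[ℂ] H)) (Q : Submodule ℂ H) : ℕ∞ :=
  sInf {m : ℕ∞ | ∃ S : Set H, S ⊆ (Q : Set H) ∧ S.encard = m ∧ genHull T S = Q}

variable {H : Type*} [NormedAddCommGroup H] [InnerProductSpace ℂ H] {ι : Type*}

lemma genHull_le {T : ι → (H →L[ℂ] H)} {S : Set H} {K : Submodule ℂ H}
    (h1 : IsClosed (K : Set H)) (h2 : S ⊆ K) (h3 : ∀ i, ∀ x ∈ K, T i x ∈ K) :
    genHull T S ≤ K :=
  sInf_le ⟨h1, h2, h3⟩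

lemma subset_genHull {T : ι → (H →L[ℂ] H)} {S : Set H} : S ⊆ (genHull T S : Set H) := by
  intro s hs
  rw [genHull, SetLike.mem_coe, Submodule.mem_sInf]
  exact fun K hK => hK.2.1 hs

lemma genHull_isClosed (T : ι → (H →L[ℂ] H)) (S : Set H) :
    IsClosed ((genHull T S : Submodule ℂ H) : Set H) := by
  have : ((genHull T S : Submodule ℂ H) : Set H) =
      ⋂ K ∈ {K : Submodule ℂ H | IsClosed (K : Set H) ∧ S ⊆ K ∧ ∀ i, ∀ x ∈ K, T i x ∈ K},
        (K : Set H) := by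
    ext x
    simp [genHull, Submodule.mem_sInf]
  rw [this]
  exact isClosed_biInter fun K hK => hK.1

lemma genHull_invariant {T : ι → (H →L[ℂ] H)} {S : Set H} :
    ∀ i, ∀ x ∈ genHull T S, T i x ∈ genHull T S := by
  intro i x hx
  rw [genHull, Submodule.mem_sInf] at hx ⊢
  exact fun K hK => hK.2.2 i x (hx K hK)

end Rudin

open Rudin in
/-- Let `T = (T 1, …, T n)` be a commuting tuple of bounded operators
on a separable complex Hilbert space `H` and let `Q` be a closed subspace invariant
under each `T i *`.  Then the rank of the compressed tuple `(P_Q T i|_Q)` (acting on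
`Q`) is at most the rank of `T`.  Here `P` is the orthogonal projection onto `Q`. -/
theorem stmt6 {H : Type*} [NormedAddCommGroup H] [InnerProductSpace ℂ H]
    [CompleteSpace H] [TopologicalSpace.SeparableSpace H]
    (n : ℕ) (T : Fin n → (H →L[ℂ] H))
    (hcomm : ∀ i j : Fin n, ∀ x : H, T i (T j x) = T j (T i x))
    (Q : Submodule ℂ H) (hQc : IsClosed (Q : Set H))
    (hQinv : ∀ i : Fin n, ∀ x ∈ Q, ContinuousLinearMap.adjoint (T i) x ∈ Q)
    (P : H →L[ℂ] H)
    (hP : ∀ x : H, P x ∈ Q ∧ x - P x ∈ Qᗮ) :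
    rankIn (fun i => P ∘L T i ∘L P) Q ≤ rankIn T (⊤ : Submodule ℂ H) := by
  -- basic facts about P
  have hPQ : ∀ x : H, P x ∈ Q := fun x => (hP x).1
  have hPid : ∀ x ∈ Q, P x = x := by
    intro x hx
    have h1 : x - P x ∈ Q := Q.sub_mem hx (hPQ x)
    have h2 : x - P x ∈ Qᗮ := (hP x).2
    have : x - P x ∈ Q ⊓ Qᗮ := ⟨h1, h2⟩
    rw [(Submodule.orthogonal_disjoint Q).eq_bot, Submodule.mem_bot] at this
    linear_combination (norm := abel) -this
  have hTperp : ∀ i : Fin n, ∀ y ∈ Qᗮ, T i y ∈ Qᗮ := by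
    intro i y hy
    rw [Submodule.mem_orthogonal] at hy ⊢
    intro u hu
    calc inner ℂ u (T i y) = inner ℂ (ContinuousLinearMap.adjoint (T i) u) y := by
          rw [ContinuousLinearMap.adjoint_inner_left]
      _ = (0 : ℂ) := hy _ (hQinv i u hu)
  have hPzero : ∀ y ∈ Qᗮ, P y = 0 := by
    intro y hy
    have h1 : P y ∈ Qᗮ := by
      have : P y = y - (y - P y) := by abel
      rw [this]; exact Qᗮ.sub_mem hy (hP y).2
    have : P y ∈ Q ⊓ Qᗮ := ⟨hPQ y, h1⟩
    rwa [(Submodule.orthogonal_disjoint Q).eq_bot, Submodule.mem_bot] at this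
  have hPT : ∀ (i : Fin n) (x : H), P (T i x) = P (T i (P x)) := by
    intro i x
    have hx : x = P x + (x - P x) := by abel
    conv_lhs => rw [hx]
    rw [map_add, map_add, hPzero _ (hTperp i _ (hP x).2), add_zero]
  -- reduce to hull statement
  apply le_sInf
  rintro m ⟨S, -, hScard, hShull⟩
  have hkey : genHull (fun i => P ∘L T i ∘L P) (P '' S) = Q := by
    apply le_antisymm
    · exact genHull_le hQc (by rintro _ ⟨s, -, rfl⟩; exact hPQ s)
        (fun i x _ => hPQ _)
    · -- Q ≤ hull
      set K := genHull (fun i => P ∘L T i ∘L P) (P '' S) with hK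
      have hM : (⊤ : Submodule ℂ H) ≤ Submodule.comap (P : H →ₗ[ℂ] H) K := by
        rw [← hShull]
        apply genHull_le
        · exact (genHull_isClosed _ _).preimage P.continuous
        · intro s hs
          exact subset_genHull ⟨s, hs, rfl⟩
        · intro i x hx
          have : P (T i x) = (P ∘L T i ∘L P) (P x) := by
            simp only [ContinuousLinearMap.comp_apply]
            rw [hPT i x, hPid _ (hPQ x)]
          simp only [Submodule.mem_comap] at hx ⊢
          rw [ContinuousLinearMap.coe_coe, this]
          exact genHull_invariant i _ hx
      intro x hx
      have := hM (Submodule.mem_top (x := x))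
      simpa [Submodule.mem_comap, hPid x hx] using this
  calc rankIn (fun i => P ∘L T i ∘L P) Q ≤ (P '' S).encard :=
        sInf_le ⟨P '' S, by rw [← hkey]; exact Rudin.subset_genHull, rfl, hkey⟩
    _ ≤ S.encard := Set.encard_image_le _ _
    _ = m := hScard
end
end

section
/- For every α ∈ 𝔻 and every integer m ≥ 1, the set {b_α^j · (M_z* b_α) : 0 ≤ j ≤ m-1} is an orthogonal basis of the m-dimensional quotient module Q_{b_α^m} = H²(𝔻) ⊖ b_α^m H²(𝔻), and each of these vectors has norm (1-|α|²)^{1/2}. -/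
open scoped ComplexConjugate

noncomputable section

namespace Aux8
open Rudin

lemma mem_disc {z : ℂ} : z ∈ disc ↔ ‖z‖ < 1 := by
  simp [disc, Metric.mem_ball, dist_eq_norm]

lemma coeff_le (f : H2) (n : ℕ) : ‖(f : ℕ → ℂ) n‖ ≤ ‖f‖ :=
  lp.norm_apply_le_norm two_ne_zero f n

lemma summable_coeff_mul (f : H2) {z : ℂ} (hz : ‖z‖ < 1) :
    Summable fun n => (f : ℕ → ℂ) n * z ^ n := by
  apply Summable.of_norm
  apply Summable.of_nonneg_of_le (fun n => norm_nonneg _)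
    (fun n => ?_) ((summable_geometric_of_lt_one (norm_nonneg z) hz).mul_left ‖f‖)
  rw [norm_mul, norm_pow]
  exact mul_le_mul_of_nonneg_right (coeff_le f n) (by positivity)

lemma eval_add (f g : H2) {z : ℂ} (hz : z ∈ disc) :
    H2.eval (f + g) z = H2.eval f z + H2.eval g z := by
  rw [H2.eval, H2.eval, H2.eval, ← Summable.tsum_add (summable_coeff_mul f (mem_disc.mp hz))
    (summable_coeff_mul g (mem_disc.mp hz))]
  apply tsum_congr; intro n
  simp [lp.coeFn_add, add_mul]

lemma eval_smul (c : ℂ) (f : H2) (z : ℂ) :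
    H2.eval (c • f) z = c * H2.eval f z := by
  rw [H2.eval, H2.eval, ← tsum_mul_left]
  apply tsum_congr; intro n
  simp [lp.coeFn_smul, mul_assoc]

lemma eval_sub (f g : H2) {z : ℂ} (hz : z ∈ disc) :
    H2.eval (f - g) z = H2.eval f z - H2.eval g z := by
  have h0 : f - g + g = f := by abel
  have h2 := eval_add (f - g) g hz
  rw [h0] at h2
  rw [h2]; ring

lemma eval_eq_zero {f : H2} (h : ∀ z ∈ disc, H2.eval f z = 0) : f = 0 := by
  set p := FormalMultilinearSeries.ofScalars ℂ (fun n => (f : ℕ → ℂ) n) with hp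
  have hrad : 1 ≤ p.radius := by
    apply FormalMultilinearSeries.le_radius_of_bound _ ‖f‖
    intro n
    rw [FormalMultilinearSeries.ofScalars_norm]
    simpa using coeff_le f n
  have hball : HasFPowerSeriesOnBall p.sum p 0 1 :=
    (p.hasFPowerSeriesOnBall (lt_of_lt_of_le one_pos hrad)).mono one_pos hrad
  have hsum : ∀ z ∈ disc, p.sum z = H2.eval f z := by
    intro z hz
    rw [FormalMultilinearSeries.sum, H2.eval]
    exact tsum_congr fun n => by
      rw [hp, FormalMultilinearSeries.ofScalars_apply_eq]; simp [mul_comm]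
  have hzero : HasFPowerSeriesAt (fun _ => (0 : ℂ)) p 0 := by
    apply hball.hasFPowerSeriesAt.congr
    filter_upwards [Metric.ball_mem_nhds (0:ℂ) one_pos] with z hz
    have hzd : z ∈ disc := hz
    rw [hsum z hzd, h z hzd]
  have : p = 0 := by
    have h0 : HasFPowerSeriesAt (fun _ => (0 : ℂ)) (0 : FormalMultilinearSeries ℂ ℂ ℂ) 0 := by
      simpa using hasFPowerSeriesAt_const (c := (0:ℂ)) (e := (0:ℂ))
    exact hzero.eq_formalMultilinearSeries h0
  apply lp.ext
  funext n
  have := congrFun (congrArg (fun q : FormalMultilinearSeries ℂ ℂ ℂ => q) this) n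
  rw [hp] at this
  simp only [FormalMultilinearSeries.zero_apply] at this
  have hc : (f : ℕ → ℂ) n = 0 := (FormalMultilinearSeries.ofScalars_eq_zero ℂ n).mp this
  simpa using hc



lemma memℓp_two_of {x : ℕ → ℂ} (h : Summable fun n => ‖x n‖ ^ (2:ℝ)) :
    Memℓp x 2 := by
  apply memℓp_gen
  simpa using h

lemma summable_sq (f : H2) : Summable fun n => ‖(f : ℕ → ℂ) n‖ ^ (2:ℝ) := by
  have := (lp.memℓp f).summable (p := 2) (by norm_num)
  simpa using this

def shiftFun (x : ℕ → ℂ) : ℕ → ℂ := fun n => Nat.casesOn n 0 x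

@[simp] lemma shiftFun_zero (x : ℕ → ℂ) : shiftFun x 0 = 0 := rfl
@[simp] lemma shiftFun_succ (x : ℕ → ℂ) (n : ℕ) : shiftFun x (n + 1) = x n := rfl

lemma summable_shift (f : H2) :
    Summable fun n => ‖shiftFun (f : ℕ → ℂ) n‖ ^ (2:ℝ) := by
  apply (summable_nat_add_iff 1).mp
  simpa [shiftFun] using summable_sq f

lemma tsum_shift (f : H2) :
    ∑' n, ‖shiftFun (f : ℕ → ℂ) n‖ ^ (2:ℝ) = ∑' n, ‖(f : ℕ → ℂ) n‖ ^ (2:ℝ) := by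
  rw [Summable.tsum_eq_zero_add (summable_shift f)]
  simp [shiftFun, Real.zero_rpow]

def Sl : H2 →ₗ[ℂ] H2 where
  toFun f := ⟨shiftFun f, memℓp_two_of (by
    simpa using (summable_shift f))⟩
  map_add' f g := by
    apply lp.ext; funext n
    show shiftFun (⇑(f + g)) n = (⟨shiftFun f, _⟩ + (⟨shiftFun g, _⟩ : H2) : H2) n
    rw [lp.coeFn_add]
    show shiftFun (⇑(f + g)) n = shiftFun (⇑f) n + shiftFun (⇑g) n
    cases n <;> simp [shiftFun, lp.coeFn_add]
  map_smul' c f := by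
    apply lp.ext; funext n
    show shiftFun (⇑(c • f)) n = (c • (⟨shiftFun f, _⟩ : H2) : H2) n
    rw [lp.coeFn_smul]
    show shiftFun (⇑(c • f)) n = c • shiftFun (⇑f) n
    cases n <;> simp [shiftFun, lp.coeFn_smul]

lemma Sl_apply (f : H2) : ((Sl f : H2) : ℕ → ℂ) = shiftFun f := rfl

lemma norm_Sl (f : H2) : ‖Sl f‖ = ‖f‖ := by
  rw [lp.norm_eq_tsum_rpow (by norm_num) (Sl f), lp.norm_eq_tsum_rpow (by norm_num) f]
  congr 1
  have := tsum_shift f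
  simpa [Sl_apply] using this

def S : H2 →L[ℂ] H2 := Sl.mkContinuous 1 (fun f => by rw [norm_Sl, one_mul])

lemma S_apply (f : H2) (n : ℕ) : ((S f : H2) : ℕ → ℂ) n = shiftFun f n := rfl

lemma norm_S_app (f : H2) : ‖S f‖ = ‖f‖ := norm_Sl f

def dropFun (x : ℕ → ℂ) : ℕ → ℂ := fun n => x (n + 1)

lemma summable_drop (f : H2) :
    Summable fun n => ‖dropFun (f : ℕ → ℂ) n‖ ^ (2:ℝ) := by
  have := summable_sq f
  exact (summable_nat_add_iff 1).mpr this

def Dl : H2 →ₗ[ℂ] H2 where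
  toFun f := ⟨dropFun f, memℓp_two_of (summable_drop f)⟩
  map_add' f g := by
    apply lp.ext; funext n
    show dropFun (⇑(f + g)) n = (⟨dropFun f, _⟩ + (⟨dropFun g, _⟩ : H2) : H2) n
    rw [lp.coeFn_add]
    show dropFun (⇑(f + g)) n = dropFun (⇑f) n + dropFun (⇑g) n
    simp [dropFun, lp.coeFn_add]
  map_smul' c f := by
    apply lp.ext; funext n
    show dropFun (⇑(c • f)) n = (c • (⟨dropFun f, _⟩ : H2) : H2) n
    rw [lp.coeFn_smul]
    show dropFun (⇑(c • f)) n = c • dropFun (⇑f) n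
    simp [dropFun, lp.coeFn_smul]

lemma Dl_apply (f : H2) (n : ℕ) : ((Dl f : H2) : ℕ → ℂ) n = (f : ℕ → ℂ) (n + 1) := rfl

lemma norm_Dl (f : H2) : ‖Dl f‖ ≤ ‖f‖ := by
  rw [lp.norm_eq_tsum_rpow (by norm_num) (Dl f), lp.norm_eq_tsum_rpow (by norm_num) f]
  apply Real.rpow_le_rpow (tsum_nonneg (fun n => Real.rpow_nonneg (norm_nonneg _) _)) ?_ (by norm_num)
  simp only [ENNReal.toReal_ofNat]
  have hsum := summable_sq f
  have h1 : ∑' n, ‖(f : ℕ → ℂ) n‖ ^ (2:ℝ)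
      = ‖(f : ℕ → ℂ) 0‖ ^ (2:ℝ) + ∑' n, ‖(f : ℕ → ℂ) (n+1)‖ ^ (2:ℝ) :=
    Summable.tsum_eq_zero_add hsum
  have h2 : ∑' n, ‖((Dl f : H2) : ℕ → ℂ) n‖ ^ (2:ℝ) = ∑' n, ‖(f : ℕ → ℂ) (n+1)‖ ^ (2:ℝ) := by
    apply tsum_congr; intro n; rw [Dl_apply]
  rw [h2, h1]
  have : (0:ℝ) ≤ ‖(f : ℕ → ℂ) 0‖ ^ (2:ℝ) := Real.rpow_nonneg (norm_nonneg _) _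
  linarith

def D : H2 →L[ℂ] H2 := Dl.mkContinuous 1 (fun f => by rw [one_mul]; exact norm_Dl f)

lemma D_apply (f : H2) (n : ℕ) : ((D f : H2) : ℕ → ℂ) n = (f : ℕ → ℂ) (n + 1) := rfl



lemma eval_injective {f g : H2} (h : ∀ z ∈ disc, H2.eval f z = H2.eval g z) : f = g := by
  have h0 : ∀ z ∈ disc, H2.eval (f - g) z = 0 := by
    intro z hz
    rw [eval_sub f g hz, h z hz, sub_self]
  have := eval_eq_zero h0
  have h1 : f - g + g = 0 + g := by rw [this]
  simpa using h1

lemma norm_S_le : ‖S‖ ≤ 1 := LinearMap.mkContinuous_norm_le Sl zero_le_one _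

lemma norm_D_le : ‖D‖ ≤ 1 := LinearMap.mkContinuous_norm_le Dl zero_le_one _

lemma S_apply' (f : H2) (n : ℕ) :
    ((S f : H2) : ℕ → ℂ) n = (fun n => Nat.casesOn n 0 (f : ℕ → ℂ)) n := rfl

local notation "⟪" x ", " y "⟫" => @inner ℂ _ _ x y

lemma inner_eq (f g : H2) : ⟪f, g⟫ = ∑' n, conj ((f : ℕ → ℂ) n) * (g : ℕ → ℂ) n := by
  rw [lp.inner_eq_tsum]
  exact tsum_congr fun n => by rw [RCLike.inner_apply]; exact mul_comm _ _

lemma summable_inner' (f g : H2) :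
    Summable fun n => conj ((f : ℕ → ℂ) n) * (g : ℕ → ℂ) n := by
  have := lp.summable_inner (𝕜 := ℂ) f g
  simpa [RCLike.inner_apply, mul_comm] using this

lemma inner_S_S (f g : H2) : ⟪S f, S g⟫ = ⟪f, g⟫ := by
  rw [inner_eq, inner_eq, Summable.tsum_eq_zero_add (by
    have := summable_inner' (S f) (S g); exact this)]
  simp [S_apply]

lemma eval_S (f : H2) {z : ℂ} (hz : z ∈ disc) :
    H2.eval (S f) z = z * H2.eval f z := by
  rw [H2.eval, H2.eval, Summable.tsum_eq_zero_add (summable_coeff_mul (S f) (mem_disc.mp hz))]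
  rw [← tsum_mul_left]
  simp only [S_apply]
  simp [pow_succ, mul_comm, mul_assoc, mul_left_comm]

lemma adjoint_S : ContinuousLinearMap.adjoint S = D := by
  symm
  rw [ContinuousLinearMap.eq_adjoint_iff]
  intro x y
  rw [inner_eq, inner_eq, Summable.tsum_eq_zero_add (summable_inner' x (S y))]
  simp [D_apply, S_apply]

section Alpha
variable {α : ℂ}

lemma cz_ne (hα : ‖α‖ < 1) {z : ℂ} (hz : z ∈ disc) : (1 : ℂ) - conj α * z ≠ 0 := by
  intro h
  have h1 : conj α * z = 1 := by linear_combination -h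
  have : ‖conj α * z‖ < 1 := by
    rw [norm_mul, RCLike.norm_conj]
    calc ‖α‖ * ‖z‖ ≤ 1 * ‖z‖ := by
          apply mul_le_mul_of_nonneg_right hα.le (norm_nonneg _)
      _ = ‖z‖ := one_mul _
      _ < 1 := mem_disc.mp hz
  rw [h1] at this; simp at this

/-- the geometric / kernel element `n ↦ (conj α)^n` -/
def kel (hα : ‖α‖ < 1) : H2 :=
  ⟨fun n => (conj α) ^ n, memℓp_two_of (by
    have h2 : ‖α‖ ^ 2 < 1 := by nlinarith [norm_nonneg α]
    apply Summable.congr (summable_geometric_of_lt_one (by positivity) h2)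
    intro n
    rw [show (2:ℝ) = ((2:ℕ):ℝ) by norm_num, Real.rpow_natCast]
    rw [norm_pow, RCLike.norm_conj, ← pow_mul, ← pow_mul, Nat.mul_comm])⟩

lemma kel_apply (hα : ‖α‖ < 1) (n : ℕ) : ((kel hα : H2) : ℕ → ℂ) n = (conj α) ^ n := rfl

lemma eval_kel (hα : ‖α‖ < 1) {z : ℂ} (hz : z ∈ disc) :
    H2.eval (kel hα) z = (1 - conj α * z)⁻¹ := by
  rw [H2.eval]
  have h1 : ‖conj α * z‖ < 1 := by
    rw [norm_mul, RCLike.norm_conj]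
    calc ‖α‖ * ‖z‖ ≤ 1 * ‖z‖ := mul_le_mul_of_nonneg_right hα.le (norm_nonneg _)
      _ < 1 := by rw [one_mul]; exact mem_disc.mp hz
  have := tsum_geometric_of_norm_lt_one h1
  rw [← this]
  exact tsum_congr fun n => by rw [kel_apply, mul_pow]

lemma inner_kel (hα : ‖α‖ < 1) (f : H2) : ⟪kel hα, f⟫ = H2.eval f α := by
  rw [inner_eq, H2.eval]
  exact tsum_congr fun n => by
    rw [kel_apply, ← map_pow, Complex.conj_conj, mul_comm]

set_option maxHeartbeats 1000000 in
lemma norm_smul_S (hα : ‖α‖ < 1) : ‖(conj α) • S‖ < 1 := by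
  have h1 : ‖(conj α) • S‖ = ‖conj α‖ * ‖S‖ := norm_smul (conj α) S
  rw [h1, RCLike.norm_conj]
  calc ‖α‖ * ‖S‖ ≤ ‖α‖ * 1 := mul_le_mul_of_nonneg_left norm_S_le (norm_nonneg _)
    _ < 1 := by rwa [mul_one]

/-- the unit `1 - conj α • S` -/
def uS (hα : ‖α‖ < 1) : (H2 →L[ℂ] H2)ˣ := Units.oneSub ((conj α) • S) (norm_smul_S hα)

/-- multiplication by the Blaschke factor -/
def Mop (hα : ‖α‖ < 1) : H2 →L[ℂ] H2 := (S - α • 1) * ↑(uS hα)⁻¹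

lemma uS_eq (hα : ‖α‖ < 1) (f : H2) :
    (uS hα : H2 →L[ℂ] H2) ((↑(uS hα)⁻¹ : H2 →L[ℂ] H2) f) = f := by
  have h := (uS hα).mul_inv
  calc (uS hα : H2 →L[ℂ] H2) ((↑(uS hα)⁻¹ : H2 →L[ℂ] H2) f)
      = ((uS hα : H2 →L[ℂ] H2) * (↑(uS hα)⁻¹ : H2 →L[ℂ] H2)) f := rfl
    _ = f := by rw [h]; rfl

lemma uS_apply (hα : ‖α‖ < 1) (f : H2) :
    (uS hα : H2 →L[ℂ] H2) f = f - (conj α) • S f := by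
  show ((1 : H2 →L[ℂ] H2) - (conj α) • S) f = _
  simp

lemma eval_uinv (hα : ‖α‖ < 1) (f : H2) {z : ℂ} (hz : z ∈ disc) :
    H2.eval ((↑(uS hα)⁻¹ : H2 →L[ℂ] H2) f) z = H2.eval f z / (1 - conj α * z) := by
  set p := (↑(uS hα)⁻¹ : H2 →L[ℂ] H2) f with hp
  have h1 : f = p - (conj α) • S p := by
    rw [← uS_apply hα p, hp, uS_eq]
  have h2 : H2.eval f z = (1 - conj α * z) * H2.eval p z := by
    rw [h1, eval_sub _ _ hz, eval_smul, eval_S _ hz]; ring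
  rw [h2, mul_comm, mul_div_assoc, div_self (cz_ne hα hz), mul_one]

lemma eval_Mop (hα : ‖α‖ < 1) (f : H2) {z : ℂ} (hz : z ∈ disc) :
    H2.eval (Mop hα f) z = blaschke α z * H2.eval f z := by
  have h0 : Mop hα f = S ((↑(uS hα)⁻¹ : H2 →L[ℂ] H2) f)
      - α • ((↑(uS hα)⁻¹ : H2 →L[ℂ] H2) f) := by
    show ((S - α • 1) * _) f = _
    simp [ContinuousLinearMap.mul_apply]
  rw [h0, eval_sub _ _ hz, eval_smul, eval_S _ hz, eval_uinv hα f hz, blaschke]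
  field_simp [cz_ne hα hz]

lemma inner_Mop (hα : ‖α‖ < 1) (f g : H2) : ⟪Mop hα f, Mop hα g⟫ = ⟪f, g⟫ := by
  set p := (↑(uS hα)⁻¹ : H2 →L[ℂ] H2) f with hp
  set q := (↑(uS hα)⁻¹ : H2 →L[ℂ] H2) g with hq
  have h1 : f = p - (conj α) • S p := by rw [← uS_apply hα p, hp, uS_eq]
  have h2 : g = q - (conj α) • S q := by rw [← uS_apply hα q, hq, uS_eq]
  have h3 : Mop hα f = S p - α • p := by
    show ((S - α • 1) * _) f = _
    simp [ContinuousLinearMap.mul_apply, hp]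
  have h4 : Mop hα g = S q - α • q := by
    show ((S - α • 1) * _) g = _
    simp [ContinuousLinearMap.mul_apply, hq]
  rw [h3, h4]
  conv_rhs => rw [h1, h2]
  simp only [inner_sub_left, inner_sub_right, inner_smul_left, inner_smul_right,
    inner_S_S, Complex.conj_conj, RingHom.id_apply, starRingEnd_apply, star_star]
  ring

lemma inner_Mop_pow (hα : ‖α‖ < 1) (j : ℕ) (f g : H2) :
    ⟪(Mop hα ^ j) f, (Mop hα ^ j) g⟫ = ⟪f, g⟫ := by
  induction j generalizing f g with
  | zero => simp
  | succ n ih =>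
      have e : ∀ x : H2, (Mop hα ^ (n+1)) x = (Mop hα ^ n) (Mop hα x) := by
        intro x; rw [pow_succ]; rfl
      rw [e f, e g, ih, inner_Mop]

lemma inner_Mop_cross (hα : ‖α‖ < 1) (j d : ℕ) (f g : H2) :
    ⟪(Mop hα ^ j) f, (Mop hα ^ (j + d)) g⟫ = ⟪f, (Mop hα ^ d) g⟫ := by
  have e : (Mop hα ^ (j + d)) g = (Mop hα ^ j) ((Mop hα ^ d) g) := by
    rw [pow_add]; rfl
  rw [e, inner_Mop_pow]

set_option maxHeartbeats 1000000 in
lemma norm_smul_D (hα : ‖α‖ < 1) : ‖α • D‖ < 1 := by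
  have h1 : ‖α • D‖ = ‖α‖ * ‖D‖ := norm_smul α D
  rw [h1]
  calc ‖α‖ * ‖D‖ ≤ ‖α‖ * 1 := mul_le_mul_of_nonneg_left norm_D_le (norm_nonneg _)
    _ < 1 := by rwa [mul_one]

def vS (hα : ‖α‖ < 1) : (H2 →L[ℂ] H2)ˣ := Units.oneSub (α • D) (norm_smul_D hα)

lemma vS_eq (hα : ‖α‖ < 1) (f : H2) :
    (vS hα : H2 →L[ℂ] H2) ((↑(vS hα)⁻¹ : H2 →L[ℂ] H2) f) = f := by
  have h := (vS hα).mul_inv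
  calc (vS hα : H2 →L[ℂ] H2) ((↑(vS hα)⁻¹ : H2 →L[ℂ] H2) f)
      = ((vS hα : H2 →L[ℂ] H2) * (↑(vS hα)⁻¹ : H2 →L[ℂ] H2)) f := rfl
    _ = f := by rw [h]; rfl

lemma uS_inv_eq (hα : ‖α‖ < 1) (f : H2) :
    (↑(uS hα)⁻¹ : H2 →L[ℂ] H2) ((uS hα : H2 →L[ℂ] H2) f) = f := by
  have h := (uS hα).inv_mul
  calc (↑(uS hα)⁻¹ : H2 →L[ℂ] H2) ((uS hα : H2 →L[ℂ] H2) f)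
      = ((↑(uS hα)⁻¹ : H2 →L[ℂ] H2) * (uS hα : H2 →L[ℂ] H2)) f := rfl
    _ = f := by rw [h]; rfl

lemma vS_apply (hα : ‖α‖ < 1) (f : H2) :
    (vS hα : H2 →L[ℂ] H2) f = f - α • D f := by
  show ((1 : H2 →L[ℂ] H2) - α • D) f = _
  simp

lemma summable_pow_mul (hα : ‖α‖ < 1) (f : H2) :
    Summable fun n => α ^ n * (f : ℕ → ℂ) n := by
  apply Summable.of_norm
  apply Summable.of_nonneg_of_le (fun n => norm_nonneg _) (fun n => ?_)
    ((summable_geometric_of_lt_one (norm_nonneg α) hα).mul_right ‖f‖)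
  rw [norm_mul, norm_pow]
  exact mul_le_mul_of_nonneg_left (coeff_le f n) (by positivity)

lemma tsum_pow_mul_eq (hα : ‖α‖ < 1) (f : H2) :
    ∑' n, α ^ n * (f : ℕ → ℂ) n = ⟪kel hα, f⟫ := by
  rw [inner_kel, H2.eval]
  exact tsum_congr fun n => mul_comm _ _

lemma peel (hα : ‖α‖ < 1) (f : H2) (h0 : ⟪kel hα, f⟫ = 0) :
    ∃ w : H2, Mop hα w = f := by
  set q := (↑(vS hα)⁻¹ : H2 →L[ℂ] H2) f with hqdef
  have h1 : f = q - α • D q := by rw [← vS_apply hα q, hqdef, vS_eq]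
  have hfq : ∀ n, (f : ℕ → ℂ) n = (q : ℕ → ℂ) n - α * (q : ℕ → ℂ) (n+1) := by
    intro n
    conv_lhs => rw [h1]
    rw [lp.coeFn_sub, Pi.sub_apply, lp.coeFn_smul, Pi.smul_apply, D_apply]
    rfl
  have hps : ∀ N, ∑ n ∈ Finset.range N, α ^ n * (f : ℕ → ℂ) n
      = (q : ℕ → ℂ) 0 - α ^ N * (q : ℕ → ℂ) N := by
    intro N
    induction N with
    | zero => simp
    | succ N ih =>
        rw [Finset.sum_range_succ, ih, hfq N]
        ring
  have hq0 : (q : ℕ → ℂ) 0 = 0 := by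
    have hs := (summable_pow_mul hα f).hasSum
    have ht1 := hs.tendsto_sum_nat
    have ht2 : Filter.Tendsto (fun N => ∑ n ∈ Finset.range N, α ^ n * (f : ℕ → ℂ) n)
        Filter.atTop (nhds ((q : ℕ → ℂ) 0)) := by
      have hz : Filter.Tendsto (fun N => α ^ N * (q : ℕ → ℂ) N) Filter.atTop (nhds 0) := by
        have hlim : Filter.Tendsto (fun k : ℕ => ‖α‖ ^ k * ‖q‖) Filter.atTop (nhds 0) := by
          have := (tendsto_pow_atTop_nhds_zero_of_lt_one (norm_nonneg α) hα).mul_const ‖q‖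
          simpa using this
        apply squeeze_zero_norm (fun N => ?_) hlim
        rw [norm_mul, norm_pow]
        exact mul_le_mul_of_nonneg_left (coeff_le q N) (by positivity)
      have hconst : Filter.Tendsto (fun _ : ℕ => (q : ℕ → ℂ) 0) Filter.atTop
          (nhds ((q : ℕ → ℂ) 0)) := tendsto_const_nhds
      have hsub := hconst.sub hz
      rw [sub_zero] at hsub
      apply hsub.congr
      intro N
      rw [hps N]
    have := tendsto_nhds_unique ht1 ht2
    rw [← this, tsum_pow_mul_eq hα f, h0]
  refine ⟨(uS hα : H2 →L[ℂ] H2) (D q), ?_⟩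
  have h2 : Mop hα ((uS hα : H2 →L[ℂ] H2) (D q)) = S (D q) - α • (D q) := by
    show ((S - α • 1) * ↑(uS hα)⁻¹) _ = _
    rw [ContinuousLinearMap.mul_apply, uS_inv_eq]
    simp
  rw [h2]
  apply lp.ext
  funext n
  rw [lp.coeFn_sub, Pi.sub_apply, lp.coeFn_smul, Pi.smul_apply]
  cases n with
  | zero =>
      have e1 : ((S (D q) : H2) : ℕ → ℂ) 0 = 0 := S_apply (D q) 0
      rw [e1, D_apply, hfq 0, hq0]
      simp
  | succ n =>
      have e1 : ((S (D q) : H2) : ℕ → ℂ) (n+1) = ((D q : H2) : ℕ → ℂ) n := S_apply (D q) (n+1)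
      rw [e1, D_apply, D_apply, hfq (n+1)]
      rfl

lemma key_zero (hα : ‖α‖ < 1) : ∀ (m : ℕ) (f : H2),
    (∀ x : H2, ⟪(Mop hα ^ m) x, f⟫ = 0) → (∀ j, j < m → ⟪(Mop hα ^ j) (kel hα), f⟫ = 0) →
    f = 0 := by
  intro m
  induction m with
  | zero =>
      intro f hx _
      have := hx f
      simp only [pow_zero, ContinuousLinearMap.one_apply] at this
      exact inner_self_eq_zero.mp this
  | succ m ih =>
      intro f hx hj
      have h0 : ⟪kel hα, f⟫ = 0 := by
        have := hj 0 (Nat.succ_pos m)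
        simpa using this
      obtain ⟨w, hw⟩ := peel hα f h0
      have hsucc : ∀ x : H2, (Mop hα ^ (m+1)) x = Mop hα ((Mop hα ^ m) x) := by
        intro x; rw [pow_succ']; rfl
      have hx' : ∀ x : H2, ⟪(Mop hα ^ m) x, w⟫ = 0 := by
        intro x
        have := hx x
        rw [hsucc x, ← hw, inner_Mop] at this
        exact this
      have hj' : ∀ j, j < m → ⟪(Mop hα ^ j) (kel hα), w⟫ = 0 := by
        intro j hjm
        have := hj (j+1) (by omega)
        rw [show (Mop hα ^ (j+1)) (kel hα) = Mop hα ((Mop hα ^ j) (kel hα)) by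
          rw [pow_succ']; rfl, ← hw, inner_Mop] at this
        exact this
      have hw0 : w = 0 := ih w hx' hj'
      rw [← hw, hw0, map_zero]



lemma blaschke_self : blaschke α α = 0 := by
  simp [blaschke]

def Bel (hα : ‖α‖ < 1) : H2 := S (kel hα) - α • kel hα

lemma eval_Bel (hα : ‖α‖ < 1) {z : ℂ} (hz : z ∈ disc) :
    H2.eval (Bel hα) z = blaschke α z := by
  rw [Bel, eval_sub _ _ hz, eval_smul, eval_S _ hz, eval_kel hα hz, blaschke]
  field_simp [cz_ne hα hz]

lemma D_Bel (hα : ‖α‖ < 1) : D (Bel hα) = (1 - α * conj α) • kel hα := by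
  apply lp.ext; funext n
  rw [D_apply]
  have h1 : ((Bel hα : H2) : ℕ → ℂ) (n+1) = (conj α) ^ n - α * (conj α) ^ (n+1) := by
    rw [Bel, lp.coeFn_sub, Pi.sub_apply, lp.coeFn_smul, Pi.smul_apply]
    rw [show ((S (kel hα) : H2) : ℕ → ℂ) (n+1) = (conj α) ^ n from S_apply' _ _]
    rw [kel_apply]
    rfl
  rw [h1, lp.coeFn_smul, Pi.smul_apply, kel_apply, smul_eq_mul]
  ring

lemma c_eq : 1 - α * conj α = ((1 - ‖α‖ ^ 2 : ℝ) : ℂ) := by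
  rw [Complex.mul_conj, Complex.normSq_eq_norm_sq]
  push_cast
  ring

lemma c_ne (hα : ‖α‖ < 1) : (1 - α * conj α) ≠ 0 := by
  rw [c_eq]
  have : (0:ℝ) < 1 - ‖α‖ ^ 2 := by nlinarith [norm_nonneg α]
  exact_mod_cast Complex.ofReal_ne_zero.mpr (by linarith)

lemma inner_kel_kel (hα : ‖α‖ < 1) : ⟪kel hα, kel hα⟫ = (1 - α * conj α)⁻¹ := by
  rw [inner_kel hα _, eval_kel hα (mem_disc.mpr hα), mul_comm]

lemma inner_g0 (hα : ‖α‖ < 1) :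
    ⟪(1 - α * conj α) • kel hα, (1 - α * conj α) • kel hα⟫ = ((1 - ‖α‖ ^ 2 : ℝ) : ℂ) := by
  rw [inner_smul_left, inner_smul_right, inner_kel_kel hα,
    mul_inv_cancel₀ (c_ne hα), mul_one, ← c_eq]
  rw [c_eq]
  exact Complex.conj_ofReal _

lemma eval_Mop_pow (hα : ‖α‖ < 1) (j : ℕ) (f : H2) {z : ℂ} (hz : z ∈ disc) :
    H2.eval ((Mop hα ^ j) f) z = blaschke α z ^ j * H2.eval f z := by
  induction j generalizing f with
  | zero => simp
  | succ n ih =>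
      have e : (Mop hα ^ (n+1)) f = (Mop hα ^ n) (Mop hα f) := by rw [pow_succ]; rfl
      rw [e, ih (Mop hα f), eval_Mop hα f hz, pow_succ]
      ring

lemma inner_g0_Mop (hα : ‖α‖ < 1) (d : ℕ) (hd : d ≠ 0) (x : H2) :
    ⟪(1 - α * conj α) • kel hα, (Mop hα ^ d) x⟫ = 0 := by
  rw [inner_smul_left, inner_kel hα, eval_Mop_pow hα d x (mem_disc.mpr hα),
    blaschke_self, zero_pow hd, zero_mul, mul_zero]

lemma norm_Mop_pow_g0 (hα : ‖α‖ < 1) (j : ℕ) :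
    ‖(Mop hα ^ j) ((1 - α * conj α) • kel hα)‖ = Real.sqrt (1 - ‖α‖ ^ 2) := by
  rw [@norm_eq_sqrt_re_inner ℂ, inner_Mop_pow hα j, inner_g0 hα]
  simp [RCLike.re_to_complex, ← Complex.ofReal_pow, Complex.ofReal_re]

end Alpha
end Aux8

open Rudin in
/-- For `α ∈ 𝔻` and `m ≥ 1`, the vectors `g j = b_α^j · (M_z* b_α)`,
`0 ≤ j ≤ m-1`, form an orthogonal basis of the `m`-dimensional quotient module
`Q_{b_α^m} = H²(𝔻) ⊖ b_α^m H²(𝔻)`, each of norm `(1-|α|²)^{1/2}`. -/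
theorem stmt8 (α : ℂ) (hα : α ∈ disc) (m : ℕ) (hm : 1 ≤ m)
    (Mz : H2 →L[ℂ] H2) (hMz : IsMulOp (fun z => z) Mz)
    (bα : H2) (hb : ∀ z ∈ disc, H2.eval bα z = blaschke α z)
    (g : ℕ → H2)
    (hg : ∀ j, ∀ z ∈ disc,
      H2.eval (g j) z = blaschke α z ^ j * H2.eval (ContinuousLinearMap.adjoint Mz bα) z) :
    (∀ j < m, g j ∈ Qsp (fun z => blaschke α z ^ m)) ∧
    (∀ j < m, ∀ j' < m, j ≠ j' → (inner ℂ (g j) (g j') : ℂ) = 0) ∧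
    (∀ j < m, ‖g j‖ = Real.sqrt (1 - ‖α‖ ^ 2)) ∧
    Submodule.span ℂ (Set.range fun j : Fin m => g j) = Qsp (fun z => blaschke α z ^ m) ∧
    Module.finrank ℂ (Qsp (fun z => blaschke α z ^ m)) = m := by
  classical
  have hαn : ‖α‖ < 1 := Aux8.mem_disc.mp hα
  have hαd : α ∈ disc := hα
  set c : ℂ := 1 - α * conj α with hc
  set g0 : H2 := c • Aux8.kel hαn with hg0
  have hMzS : Mz = Aux8.S := by
    apply ContinuousLinearMap.ext
    intro f
    apply Aux8.eval_injective
    intro z hz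
    rw [hMz f z hz, Aux8.eval_S f hz]
  have hbB : bα = Aux8.Bel hαn :=
    Aux8.eval_injective (fun z hz => by rw [hb z hz, Aux8.eval_Bel hαn hz])
  have hadj : ContinuousLinearMap.adjoint Mz bα = g0 := by
    rw [hMzS, Aux8.adjoint_S, hbB, Aux8.D_Bel hαn]
  have hgj : ∀ j, g j = (Aux8.Mop hαn ^ j) g0 := by
    intro j
    apply Aux8.eval_injective
    intro z hz
    rw [hg j z hz, hadj, Aux8.eval_Mop_pow hαn j g0 hz]
  -- membership criterion for Qsp
  have hset : shiftedSet (fun z => blaschke α z ^ m)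
      = Set.range (⇑(Aux8.Mop hαn ^ m : H2 →L[ℂ] H2)) := by
    ext w
    constructor
    · rintro ⟨h', hh⟩
      exact ⟨h', (Aux8.eval_injective fun z hz => by
        rw [hh z hz, Aux8.eval_Mop_pow hαn m h' hz]).symm⟩
    · rintro ⟨y, rfl⟩
      exact ⟨y, fun z hz => Aux8.eval_Mop_pow hαn m y hz⟩
  have hspan : Submodule.span ℂ (shiftedSet (fun z => blaschke α z ^ m))
      = LinearMap.range ((Aux8.Mop hαn ^ m : H2 →L[ℂ] H2) : H2 →ₗ[ℂ] H2) := by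
    rw [hset, ← ContinuousLinearMap.coe_coe (Aux8.Mop hαn ^ m), ← LinearMap.coe_range,
      Submodule.span_eq]
  have hQmem : ∀ f : H2, f ∈ Qsp (fun z => blaschke α z ^ m) ↔
      ∀ x : H2, (inner ℂ ((Aux8.Mop hαn ^ m) x) f : ℂ) = 0 := by
    intro f
    rw [Qsp, hspan, Submodule.mem_orthogonal]
    constructor
    · intro H x
      exact H _ (LinearMap.mem_range_self _ x)
    · rintro H u ⟨x, rfl⟩
      exact H x
  -- part 1
  have part1 : ∀ j < m, g j ∈ Qsp (fun z => blaschke α z ^ m) := by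
    intro j hj
    rw [hQmem]
    intro x
    rw [hgj j, inner_eq_zero_symm]
    have hd : m = j + (m - j) := (Nat.add_sub_cancel' hj.le).symm
    rw [hd, Aux8.inner_Mop_cross hαn j (m - j) g0 x]
    exact Aux8.inner_g0_Mop hαn (m - j) (by omega) x
  -- part 2
  have part2 : ∀ j < m, ∀ j' < m, j ≠ j' → (inner ℂ (g j) (g j') : ℂ) = 0 := by
    have key : ∀ j j' : ℕ, j < j' → (inner ℂ (g j) (g j') : ℂ) = 0 := by
      intro j j' hlt
      rw [hgj j, hgj j']
      have hd : j' = j + (j' - j) := (Nat.add_sub_cancel' hlt.le).symm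
      rw [hd, Aux8.inner_Mop_cross hαn j (j' - j) g0 g0]
      exact Aux8.inner_g0_Mop hαn (j' - j) (by omega) g0
    intro j _ j' _ hne
    rcases lt_or_gt_of_ne hne with hlt | hgt
    · exact key j j' hlt
    · rw [inner_eq_zero_symm]
      exact key j' j hgt
  -- part 3
  have part3 : ∀ j < m, ‖g j‖ = Real.sqrt (1 - ‖α‖ ^ 2) := by
    intro j _
    rw [hgj j]
    exact Aux8.norm_Mop_pow_g0 hαn j
  -- part 4
  have part4 : Submodule.span ℂ (Set.range fun j : Fin m => g j)
      = Qsp (fun z => blaschke α z ^ m) := by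
    set P := Submodule.span ℂ (Set.range fun j : Fin m => g j) with hP
    have hPle : P ≤ Qsp (fun z => blaschke α z ^ m) := by
      rw [hP, Submodule.span_le]
      rintro _ ⟨j, rfl⟩
      exact part1 j j.2
    apply le_antisymm hPle
    intro f hf
    haveI : FiniteDimensional ℂ P := FiniteDimensional.span_of_finite ℂ (Set.finite_range _)
    set p : H2 := (P.orthogonalProjectionOnto f : H2) with hpdef
    have hfp : f - p ∈ Pᗮ := Submodule.sub_starProjection_mem_orthogonal f
    have hpP : p ∈ P := (P.orthogonalProjectionOnto f).2
    have hpQ : p ∈ Qsp (fun z => blaschke α z ^ m) := hPle hpP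
    have hfQ : f - p ∈ Qsp (fun z => blaschke α z ^ m) :=
      Submodule.sub_mem _ hf hpQ
    have hzero : f - p = 0 := by
      apply Aux8.key_zero hαn m (f - p)
      · intro x
        exact (hQmem (f - p)).mp hfQ x
      · intro j hj
        have hgjP : g j ∈ P := by
          rw [hP]
          exact Submodule.subset_span ⟨⟨j, hj⟩, rfl⟩
        have h1 : (inner ℂ (g j) (f - p) : ℂ) = 0 := hfp _ hgjP
        rw [hgj j, hg0, map_smul, inner_smul_left] at h1
        rcases mul_eq_zero.mp h1 with h2 | h2
        · exact absurd h2 (by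
            simpa using (Aux8.c_ne hαn))
        · exact h2
    have : f = p := by
      have h1 : f - p + p = 0 + p := by rw [hzero]
      simpa using h1
    rw [this]
    exact hpP
  -- part 5
  have hli : LinearIndependent ℂ (fun j : Fin m => g j) := by
    apply linearIndependent_of_ne_zero_of_inner_eq_zero
    · intro j hzero
      have h3 := part3 j j.2
      rw [hzero, norm_zero] at h3
      have hpos : (0:ℝ) < 1 - ‖α‖ ^ 2 := by nlinarith [norm_nonneg α]
      have h4 := Real.sqrt_pos.mpr hpos
      rw [← h3] at h4
      exact lt_irrefl _ h4
    · intro i j hij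
      exact part2 i i.2 j j.2 (fun h => hij (Fin.ext h))
  have part5 : Module.finrank ℂ (Qsp (fun z => blaschke α z ^ m)) = m := by
    rw [← part4, finrank_span_eq_card hli, Fintype.card_fin]
  exact ⟨part1, part2, part3, part4, part5⟩
end
end

section
/- For every α ∈ 𝔻 and every integer m ≥ 1, writing g := b_α^{m-1} · (M_z* b_α) ∈ H²(𝔻), one has ⟨g, M_z* g⟩ = conj(α)(1-|α|²); equivalently, the orthogonal projection of M_z* g onto the one-dimensional subspace ℂ·g equals conj(α)·g. -/
open scoped ComplexConjugate

noncomputable section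

section Aux
open Rudin

local notation "⟪" x ", " y "⟫" => @inner ℂ _ _ x y

lemma mem_disc_iff {z : ℂ} : z ∈ disc ↔ ‖z‖ < 1 := mem_ball_zero_iff

lemma summable_eval (f : H2) {z : ℂ} (hz : ‖z‖ < 1) :
    Summable (fun n : ℕ => (f : ℕ → ℂ) n * z ^ n) := by
  apply Summable.of_norm_bounded (g := fun n => ‖f‖ * ‖z‖ ^ n)
    ((summable_geometric_of_lt_one (norm_nonneg z) hz).mul_left _)
  intro n
  rw [norm_mul, norm_pow]
  exact mul_le_mul_of_nonneg_right (lp.norm_apply_le_norm (by norm_num) f n) (by positivity)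

lemma eval_add (f g : H2) {z : ℂ} (hz : ‖z‖ < 1) :
    H2.eval (f + g) z = H2.eval f z + H2.eval g z := by
  unfold H2.eval
  rw [← Summable.tsum_add (summable_eval f hz) (summable_eval g hz)]
  congr 1; funext n
  rw [lp.coeFn_add]; simp [add_mul]

lemma eval_smul (c : ℂ) (f : H2) {z : ℂ} (hz : ‖z‖ < 1) :
    H2.eval (c • f) z = c * H2.eval f z := by
  unfold H2.eval
  rw [← (summable_eval f hz).tsum_mul_left c]
  congr 1; funext n
  rw [lp.coeFn_smul]; simp [mul_assoc]

lemma eval_sub (f g : H2) {z : ℂ} (hz : ‖z‖ < 1) :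
    H2.eval (f - g) z = H2.eval f z - H2.eval g z := by
  have := eval_add (f - g) g hz
  rw [sub_add_cancel] at this
  rw [this]; ring

end Aux
section Aux2
open Rudin

local notation "⟪" x ", " y "⟫" => @inner ℂ _ _ x y

/-- forward shift of a sequence -/
def shiftFun (f : ℕ → ℂ) : ℕ → ℂ := fun n => Nat.casesOn n 0 fun k => f k

lemma two_toReal : ENNReal.toReal 2 = 2 := by norm_num

lemma H2_summable_sq (f : H2) : Summable (fun n => ‖(f : ℕ → ℂ) n‖ ^ (2:ℝ)) := by
  have := lp.memℓp f
  rw [memℓp_gen_iff (by rw [two_toReal]; norm_num)] at this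
  simpa [two_toReal] using this

lemma shiftFun_memℓp (f : H2) : Memℓp (shiftFun (f : ℕ → ℂ)) 2 := by
  apply memℓp_gen
  rw [two_toReal]
  apply (summable_nat_add_iff 1).mp
  exact H2_summable_sq f

/-- forward shift as lp element -/
def shiftlp (f : H2) : H2 := ⟨shiftFun (f : ℕ → ℂ), shiftFun_memℓp f⟩

@[simp] lemma shiftlp_coe (f : H2) (n : ℕ) : (shiftlp f : ℕ → ℂ) n = shiftFun (f : ℕ → ℂ) n := rfl

lemma inner_shiftlp (f g : H2) : ⟪shiftlp f, shiftlp g⟫ = ⟪f, g⟫ := by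
  rw [lp.inner_eq_tsum, lp.inner_eq_tsum]
  rw [Summable.tsum_eq_zero_add (lp.summable_inner (𝕜 := ℂ) (shiftlp f) (shiftlp g))]
  simp [shiftFun, RCLike.inner_apply]

lemma norm_shiftlp (f : H2) : ‖shiftlp f‖ = ‖f‖ := by
  have h2 : (‖shiftlp f‖ : ℝ) ^ 2 = ‖f‖ ^ 2 := by
    rw [norm_sq_eq_re_inner (𝕜 := ℂ), norm_sq_eq_re_inner (𝕜 := ℂ), inner_shiftlp]
  nlinarith [norm_nonneg (shiftlp f), norm_nonneg f]

/-- the shift operator `S = M_z` -/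
def Sop : H2 →L[ℂ] H2 :=
  LinearMap.mkContinuous
    { toFun := shiftlp
      map_add' := fun f g => by
        apply lp.ext; funext n
        rw [lp.coeFn_add]
        cases n with
        | zero => simp [shiftFun]
        | succ k => simp [shiftFun, lp.coeFn_add]
      map_smul' := fun c f => by
        apply lp.ext; funext n
        rw [lp.coeFn_smul]
        cases n with
        | zero => simp [shiftFun]
        | succ k => simp [shiftFun, lp.coeFn_smul] }
    1 (fun f => by rw [one_mul]; exact le_of_eq (norm_shiftlp f))

@[simp] lemma Sop_coe (f : H2) (n : ℕ) : (Sop f : ℕ → ℂ) n = shiftFun (f : ℕ → ℂ) n := rfl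

lemma norm_Sop_le : ‖Sop‖ ≤ 1 := LinearMap.mkContinuous_norm_le _ zero_le_one _

lemma inner_Sop (f g : H2) : ⟪Sop f, Sop g⟫ = ⟪f, g⟫ := inner_shiftlp f g

/-- backward shift -/
def bshiftFun (f : ℕ → ℂ) : ℕ → ℂ := fun n => f (n + 1)

lemma bshiftFun_memℓp (f : H2) : Memℓp (bshiftFun (f : ℕ → ℂ)) 2 := by
  apply memℓp_gen
  rw [two_toReal]
  exact (summable_nat_add_iff 1).mpr (H2_summable_sq f)

def bshiftlp (f : H2) : H2 := ⟨bshiftFun (f : ℕ → ℂ), bshiftFun_memℓp f⟩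

lemma inner_bshiftlp (f g : H2) : ⟪bshiftlp f, g⟫ = ⟪f, Sop g⟫ := by
  rw [lp.inner_eq_tsum, lp.inner_eq_tsum]
  rw [Summable.tsum_eq_zero_add (lp.summable_inner (𝕜 := ℂ) f (Sop g))]
  simp [shiftFun, bshiftFun, bshiftlp, RCLike.inner_apply]

lemma norm_bshiftlp (f : H2) : ‖bshiftlp f‖ ≤ ‖f‖ := by
  have h1 : ‖bshiftlp f‖ ^ ENNReal.toReal 2 ≤ ‖f‖ ^ ENNReal.toReal 2 := by
    rw [lp.norm_rpow_eq_tsum (by rw [two_toReal]; norm_num) (bshiftlp f),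
        lp.norm_rpow_eq_tsum (by rw [two_toReal]; norm_num) f, two_toReal]
    have e : (∑' n : ℕ, ‖(f : ℕ → ℂ) n‖ ^ (2:ℝ))
        = ‖(f : ℕ → ℂ) 0‖ ^ (2:ℝ) + ∑' n : ℕ, ‖(f : ℕ → ℂ) (n+1)‖ ^ (2:ℝ) :=
      Summable.tsum_eq_zero_add (by simpa [Real.rpow_natCast] using H2_summable_sq f)
    rw [e]
    have e2 : (∑' n : ℕ, ‖(bshiftlp f : ℕ → ℂ) n‖ ^ (2:ℝ))
        = ∑' n : ℕ, ‖(f : ℕ → ℂ) (n+1)‖ ^ (2:ℝ) := rfl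
    rw [e2]
    have : (0:ℝ) ≤ ‖(f : ℕ → ℂ) 0‖ ^ (2:ℝ) := by positivity
    linarith
  have h2 : ‖bshiftlp f‖ ^ (2:ℕ) ≤ ‖f‖ ^ (2:ℕ) := by
    have := h1
    rw [two_toReal, show (2:ℝ) = ((2:ℕ):ℝ) by norm_num, Real.rpow_natCast, Real.rpow_natCast] at this
    exact this
  exact le_of_pow_le_pow_left₀ two_ne_zero (norm_nonneg f) h2

/-- the backward shift operator -/
def Bop : H2 →L[ℂ] H2 :=
  LinearMap.mkContinuous
    { toFun := bshiftlp
      map_add' := fun f g => by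
        apply lp.ext; funext n
        rw [lp.coeFn_add]
        simp [bshiftlp, bshiftFun, lp.coeFn_add]
      map_smul' := fun c f => by
        apply lp.ext; funext n
        rw [lp.coeFn_smul]
        simp [bshiftlp, bshiftFun, lp.coeFn_smul] }
    1 (fun f => by rw [one_mul]; exact norm_bshiftlp f)

@[simp] lemma Bop_coe (f : H2) (n : ℕ) : (Bop f : ℕ → ℂ) n = (f : ℕ → ℂ) (n + 1) := rfl

lemma Bop_eq_adjoint_Sop : Bop = ContinuousLinearMap.adjoint Sop := by
  rw [ContinuousLinearMap.eq_adjoint_iff]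
  intro x y
  exact inner_bshiftlp x y

lemma Bop_Sop (f : H2) : Bop (Sop f) = f := by
  apply lp.ext; funext n; rfl

end Aux2
section Aux3
open Rudin

local notation "⟪" x ", " y "⟫" => @inner ℂ _ _ x y

lemma eval_norm_le (f : H2) {z : ℂ} (hz : ‖z‖ ≤ 1/2) : ‖H2.eval f z‖ ≤ 2 * ‖f‖ := by
  have hs : HasSum (fun n : ℕ => ‖f‖ * (1/2) ^ n) (2 * ‖f‖) := by
    have := (hasSum_geometric_of_lt_one (by norm_num : (0:ℝ) ≤ 1/2) (by norm_num)).mul_left ‖f‖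
    norm_num at this
    convert this using 1
    exacts [rfl, mul_comm _ _]
  apply tsum_of_norm_bounded hs
  intro n
  rw [norm_mul, norm_pow]
  have h1 : ‖(f : ℕ → ℂ) n‖ ≤ ‖f‖ := lp.norm_apply_le_norm (by norm_num) f n
  have h2 : ‖z‖ ^ n ≤ (1/2) ^ n := pow_le_pow_left₀ (norm_nonneg z) hz n
  have := mul_le_mul h1 h2 (by positivity) (norm_nonneg f)
  linarith

lemma eval_succ (f : H2) {z : ℂ} (hz : ‖z‖ < 1) :
    H2.eval f z = (f : ℕ → ℂ) 0 + z * H2.eval (Bop f) z := by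
  unfold H2.eval
  rw [Summable.tsum_eq_zero_add (summable_eval f hz)]
  rw [← (summable_eval (Bop f) hz).tsum_mul_left z]
  simp only [pow_zero, mul_one]
  congr 1
  apply tsum_congr
  intro n
  have : ((Bop f : H2) : ℕ → ℂ) n = (f : ℕ → ℂ) (n+1) := rfl
  rw [this]; ring

lemma coeff_zero_eq_zero (f : H2) (h : ∀ z ∈ disc, z ≠ 0 → H2.eval f z = 0) :
    (f : ℕ → ℂ) 0 = 0 := by
  rw [← norm_eq_zero]
  by_contra hne
  have hpos : 0 < ‖(f : ℕ → ℂ) 0‖ := lt_of_le_of_ne (norm_nonneg _) (Ne.symm hne)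
  -- pick real t small
  set c := ‖(f : ℕ → ℂ) 0‖ with hc
  have hBf : (0:ℝ) ≤ 2 * ‖Bop f‖ := by positivity
  set t : ℝ := min (1/2) (c / (2 * (2 * ‖Bop f‖) + 1)) with ht
  have ht0 : 0 < t := by
    apply lt_min (by norm_num)
    positivity
  have ht2 : t ≤ 1/2 := min_le_left _ _
  have htc : t * (2 * ‖Bop f‖) < c := by
    have h1 : t ≤ c / (2 * (2 * ‖Bop f‖) + 1) := min_le_right _ _
    have h2 : c / (2 * (2 * ‖Bop f‖) + 1) * (2 * ‖Bop f‖) < c := by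
      rw [div_mul_eq_mul_div, div_lt_iff₀ (by positivity)]
      nlinarith
    calc t * (2 * ‖Bop f‖) ≤ c / (2 * (2 * ‖Bop f‖) + 1) * (2 * ‖Bop f‖) :=
          mul_le_mul_of_nonneg_right h1 hBf
      _ < c := h2
  set z : ℂ := (t : ℂ) with hz
  have hznorm : ‖z‖ = t := by
    rw [hz, Complex.norm_real, Real.norm_eq_abs, abs_of_pos ht0]
  have hzdisc : z ∈ disc := by
    rw [mem_disc_iff, hznorm]; linarith
  have hzne : z ≠ 0 := by
    simp only [hz, ne_eq, Complex.ofReal_eq_zero]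
    exact ne_of_gt ht0
  have he := eval_succ f (by rw [hznorm]; linarith : ‖z‖ < 1)
  rw [h z hzdisc hzne] at he
  have : (f : ℕ → ℂ) 0 = - (z * H2.eval (Bop f) z) := by linear_combination -he
  have hb : ‖(f : ℕ → ℂ) 0‖ ≤ t * (2 * ‖Bop f‖) := by
    rw [this, norm_neg, norm_mul, hznorm]
    exact mul_le_mul_of_nonneg_left (eval_norm_le (Bop f) (by rw [hznorm]; exact ht2)) (le_of_lt ht0)
  rw [← hc] at hb
  linarith

lemma eval_eq_zero (f : H2) (h : ∀ z ∈ disc, z ≠ 0 → H2.eval f z = 0) : f = 0 := by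
  have key : ∀ n : ℕ, ∀ f : H2, (∀ z ∈ disc, z ≠ 0 → H2.eval f z = 0) → (f : ℕ → ℂ) n = 0 := by
    intro n
    induction n with
    | zero => exact fun f hf => coeff_zero_eq_zero f hf
    | succ k ih =>
      intro f hf
      have h0 : (f : ℕ → ℂ) 0 = 0 := coeff_zero_eq_zero f hf
      have hB : ∀ z ∈ disc, z ≠ 0 → H2.eval (Bop f) z = 0 := by
        intro z hzd hzn
        have hz1 : ‖z‖ < 1 := mem_disc_iff.mp hzd
        have := eval_succ f hz1
        rw [hf z hzd hzn, h0, zero_add] at this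
        field_simp at this
        exact (mul_eq_zero.mp this.symm).resolve_left hzn
      have := ih (Bop f) hB
      simpa using this
  apply lp.ext
  funext n
  have := key n f h
  simpa using this

lemma eval_inj (f g : H2) (h : ∀ z ∈ disc, z ≠ 0 → H2.eval f z = H2.eval g z) : f = g := by
  have : f - g = 0 := by
    apply eval_eq_zero
    intro z hz hzn
    rw [eval_sub f g (mem_disc_iff.mp hz), h z hz hzn, sub_self]
  have := sub_eq_zero.mp this
  exact this

end Aux3
section Aux4
open Rudin

local notation "⟪" x ", " y "⟫" => @inner ℂ _ _ x y

lemma eval_Sop (f : H2) {z : ℂ} (hz : ‖z‖ < 1) :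
    H2.eval (Sop f) z = z * H2.eval f z := by
  rw [eval_succ (Sop f) hz, Bop_Sop]
  have : ((Sop f : H2) : ℕ → ℂ) 0 = 0 := rfl
  rw [this, zero_add]

lemma Mz_eq_Sop (Mz : H2 →L[ℂ] H2) (hMz : IsMulOp (fun z => z) Mz) : Mz = Sop := by
  refine ContinuousLinearMap.ext fun f => ?_
  apply eval_inj
  intro z hz _
  rw [hMz f z hz, eval_Sop f (mem_disc_iff.mp hz)]

/-- coefficients of the Blaschke factor -/
def bcoef (α : ℂ) : ℕ → ℂ :=
  fun n => Nat.casesOn n (-α) (fun k => (conj α)^k * ((1 - ‖α‖^2 : ℝ) : ℂ))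

lemma bcoef_memℓp (α : ℂ) (hα : ‖α‖ < 1) : Memℓp (bcoef α) 2 := by
  apply memℓp_gen
  rw [two_toReal]
  simp only [show (2:ℝ) = ((2:ℕ):ℝ) by norm_num, Real.rpow_natCast]
  apply (summable_nat_add_iff 1).mp
  have hgeo : Summable (fun k : ℕ => (‖α‖^2)^k * ‖((1 - ‖α‖^2 : ℝ) : ℂ)‖^2) := by
    apply Summable.mul_right
    apply summable_geometric_of_lt_one (by positivity)
    nlinarith [norm_nonneg α]
  apply Summable.congr hgeo
  intro k
  have : bcoef α (k+1) = (conj α)^k * ((1 - ‖α‖^2 : ℝ) : ℂ) := rfl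
  rw [this]
  rw [norm_mul, norm_pow, RCLike.norm_conj]
  ring

/-- the Blaschke factor as an element of H2 -/
def blp (α : ℂ) (hα : ‖α‖ < 1) : H2 := ⟨bcoef α, bcoef_memℓp α hα⟩

lemma one_sub_conj_mul_ne_zero (α z : ℂ) (hα : ‖α‖ < 1) (hz : ‖z‖ < 1) :
    1 - conj α * z ≠ 0 := by
  intro h
  have h1 : (1:ℂ) = conj α * z := by linear_combination h
  have : (1:ℝ) = ‖conj α * z‖ := by rw [← h1, norm_one]
  rw [norm_mul, RCLike.norm_conj] at this
  nlinarith [norm_nonneg α, norm_nonneg z]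

lemma eval_blp (α : ℂ) (hα : ‖α‖ < 1) {z : ℂ} (hz : ‖z‖ < 1) :
    H2.eval (blp α hα) z = blaschke α z := by
  unfold H2.eval blaschke
  have hcoe : ((blp α hα : H2) : ℕ → ℂ) = bcoef α := rfl
  rw [Summable.tsum_eq_zero_add (summable_eval (blp α hα) hz)]
  simp only [hcoe, pow_zero, mul_one]
  have hsum : ∀ n : ℕ, bcoef α (n+1) * z^(n+1) =
      (((1 - ‖α‖^2 : ℝ) : ℂ) * z) * (conj α * z)^n := by
    intro n
    have : bcoef α (n+1) = (conj α)^n * ((1 - ‖α‖^2 : ℝ) : ℂ) := rfl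
    rw [this, mul_pow]
    ring
  rw [tsum_congr hsum, tsum_mul_left, tsum_geometric_of_norm_lt_one
    (by rw [norm_mul, RCLike.norm_conj]; nlinarith [norm_nonneg α, norm_nonneg z])]
  have hne : 1 - conj α * z ≠ 0 := one_sub_conj_mul_ne_zero α z hα hz
  have hb : bcoef α 0 = -α := rfl
  have hmc : ((‖α‖^2 : ℝ) : ℂ) = (conj α) * α := by
    rw [mul_comm, Complex.mul_conj]
    norm_cast
    rw [Complex.normSq_eq_norm_sq]
  have hcast : ((1 - ‖α‖^2 : ℝ) : ℂ) = 1 - conj α * α := by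
    rw [Complex.ofReal_sub, Complex.ofReal_one, hmc]
  rw [hb, hcast]
  field_simp
  ring

end Aux4
section Aux5
set_option maxHeartbeats 2000000
open Rudin

local notation "⟪" x ", " y "⟫" => @inner ℂ _ _ x y

variable (α : ℂ)

lemma norm_conj_smul_Sop (hα : ‖α‖ < 1) : ‖(conj α) • Sop‖ < 1 := by
  calc ‖(conj α) • Sop‖ ≤ ‖conj α‖ * ‖Sop‖ := ContinuousLinearMap.opNorm_smul_le _ _
    _ = ‖α‖ * ‖Sop‖ := by rw [RCLike.norm_conj]
    _ ≤ ‖α‖ * 1 := mul_le_mul_of_nonneg_left norm_Sop_le (norm_nonneg α)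
    _ = ‖α‖ := mul_one _
    _ < 1 := hα

/-- the invertible operator `1 - conj α • S` -/
def Vu (hα : ‖α‖ < 1) : (H2 →L[ℂ] H2)ˣ :=
  Units.oneSub ((conj α) • Sop) (norm_conj_smul_Sop α hα)

lemma Vu_val (hα : ‖α‖ < 1) : ((Vu α hα : H2 →L[ℂ] H2)) = 1 - (conj α) • Sop := by
  unfold Vu
  exact Units.val_oneSub _ _

/-- multiplication by the Blaschke factor -/
def Tmul (hα : ‖α‖ < 1) : H2 →L[ℂ] H2 :=
  (Sop - α • 1) * ((Vu α hα)⁻¹ : (H2 →L[ℂ] H2)ˣ)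

variable (hα : ‖α‖ < 1)

lemma hV1 : (1 - (conj α) • Sop) * ((Vu α hα)⁻¹ : (H2 →L[ℂ] H2)ˣ) = 1 := by
  rw [← Vu_val α hα]; exact (Vu α hα).mul_inv

lemma hV2 : (((Vu α hα)⁻¹ : (H2 →L[ℂ] H2)ˣ) : H2 →L[ℂ] H2) * (1 - (conj α) • Sop) = 1 := by
  rw [← Vu_val α hα]; exact (Vu α hα).inv_mul

lemma commute_Sop_Vinv : Commute Sop (((Vu α hα)⁻¹ : (H2 →L[ℂ] H2)ˣ) : H2 →L[ℂ] H2) := by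
  have h1 : Commute Sop ((Vu α hα : H2 →L[ℂ] H2)) := by
    rw [Vu_val]
    exact (Commute.one_right Sop).sub_right ((Commute.refl Sop).smul_right _)
  exact h1.units_inv_right

lemma star_Sop : star Sop = Bop := by
  rw [ContinuousLinearMap.star_eq_adjoint, ← Bop_eq_adjoint_Sop]

lemma star_Sop_mul_Sop : star Sop * Sop = 1 := by
  rw [star_Sop]
  refine ContinuousLinearMap.ext fun f => ?_
  simp only [ContinuousLinearMap.mul_apply, ContinuousLinearMap.one_apply]
  exact Bop_Sop f

lemma star_Tmul_mul_Tmul : star (Tmul α hα) * Tmul α hα = 1 := by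
  set V : H2 →L[ℂ] H2 := (((Vu α hα)⁻¹ : (H2 →L[ℂ] H2)ˣ) : H2 →L[ℂ] H2) with hV
  set A : H2 →L[ℂ] H2 := star Sop with hA
  have hstar1 : star (1 - (conj α) • Sop) = 1 - α • A := by
    rw [star_sub, star_one, star_smul, hA]
    norm_num
  have hstarT : star (Tmul α hα) = star V * (A - (conj α) • 1) := by
    rw [Tmul, star_mul, star_sub, star_smul, star_one]
    rfl
  have key : (A - (conj α) • 1) * (Sop - α • 1) = (1 - α • A) * (1 - (conj α) • Sop) := by
    have hAS : A * Sop = 1 := star_Sop_mul_Sop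
    simp only [mul_sub, sub_mul, smul_mul_assoc, mul_smul_comm, hAS, mul_one, one_mul,
      smul_smul]
    module
  have hsv : star V * (1 - α • A) = 1 := by
    rw [← hstar1, ← star_mul]
    have := hV1 α hα
    rw [← hV] at this
    rw [this, star_one]
  have hV1' : (1 - (conj α) • Sop) * V = 1 := by
    rw [hV]; exact hV1 α hα
  have hT : Tmul α hα = (Sop - α • 1) * V := by rw [Tmul, hV]
  calc star (Tmul α hα) * Tmul α hα
      = (star V * (A - (conj α) • 1)) * ((Sop - α • 1) * V) := by rw [hstarT, hT]
    _ = (star V * ((A - (conj α) • 1) * (Sop - α • 1))) * V := by simp only [mul_assoc]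
    _ = (star V * ((1 - α • A) * (1 - (conj α) • Sop))) * V := by rw [key]
    _ = ((star V * (1 - α • A)) * (1 - (conj α) • Sop)) * V := by simp only [mul_assoc]
    _ = 1 := by rw [hsv, one_mul, hV1']

lemma inner_Tmul (f g : H2) : ⟪Tmul α hα f, Tmul α hα g⟫ = ⟪f, g⟫ := by
  have h1 : ContinuousLinearMap.adjoint (Tmul α hα) (Tmul α hα f) = f := by
    rw [← ContinuousLinearMap.star_eq_adjoint]
    have := congrArg (fun X : H2 →L[ℂ] H2 => X f) (star_Tmul_mul_Tmul α hα)
    simpa [ContinuousLinearMap.mul_apply] using this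
  rw [← ContinuousLinearMap.adjoint_inner_left (Tmul α hα) g (Tmul α hα f), h1]

end Aux5
section Aux6
set_option maxHeartbeats 2000000
open Rudin

local notation "⟪" x ", " y "⟫" => @inner ℂ _ _ x y

variable (α : ℂ) (hα : ‖α‖ < 1)

lemma eval_Tmul (f : H2) {z : ℂ} (hz : ‖z‖ < 1) :
    H2.eval (Tmul α hα f) z = blaschke α z * H2.eval f z := by
  set V : H2 →L[ℂ] H2 := (((Vu α hα)⁻¹ : (H2 →L[ℂ] H2)ˣ) : H2 →L[ℂ] H2) with hV
  set w : H2 := V f with hw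
  have hf : f = w - (conj α) • (Sop w) := by
    have h0 := hV1 α hα
    rw [← hV] at h0
    have := congrArg (fun X : H2 →L[ℂ] H2 => X f) h0
    simp only [ContinuousLinearMap.mul_apply, ContinuousLinearMap.sub_apply,
      ContinuousLinearMap.smul_apply, ContinuousLinearMap.one_apply] at this
    rw [← hw] at this
    exact this.symm
  have hevf : H2.eval f z = (1 - conj α * z) * H2.eval w z := by
    conv_lhs => rw [hf]
    rw [eval_sub _ _ hz, eval_smul _ _ hz, eval_Sop _ hz]
    ring
  have hT : Tmul α hα f = Sop w - α • w := by
    have : Tmul α hα = (Sop - α • 1) * V := by rw [Tmul, hV]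
    have h2 := congrArg (fun X : H2 →L[ℂ] H2 => X f) this
    simp only [ContinuousLinearMap.mul_apply, ContinuousLinearMap.sub_apply,
      ContinuousLinearMap.smul_apply, ContinuousLinearMap.one_apply] at h2
    rw [← hw] at h2
    exact h2
  rw [hT, eval_sub _ _ hz, eval_smul _ _ hz, eval_Sop _ hz, hevf]
  unfold blaschke
  have hne : 1 - conj α * z ≠ 0 := one_sub_conj_mul_ne_zero α z hα hz
  rw [div_mul_eq_mul_div, eq_div_iff hne]
  ring

lemma eval_Tmul_pow (k : ℕ) (f : H2) {z : ℂ} (hz : ‖z‖ < 1) :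
    H2.eval (((Tmul α hα) ^ k) f) z = blaschke α z ^ k * H2.eval f z := by
  induction k generalizing f with
  | zero => simp
  | succ n ih =>
    have : ((Tmul α hα) ^ (n+1)) f = ((Tmul α hα) ^ n) (Tmul α hα f) := by
      rw [pow_succ, ContinuousLinearMap.mul_apply]
    rw [this, ih, eval_Tmul α hα f hz, pow_succ]
    ring

lemma commute_Sop_Tmul : Commute Sop (Tmul α hα) := by
  have h1 : Commute Sop (Sop - α • 1) :=
    (Commute.refl Sop).sub_right ((Commute.one_right Sop).smul_right α)
  exact h1.mul_right (commute_Sop_Vinv α hα)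

lemma inner_Tmul_pow (k : ℕ) (f g : H2) :
    ⟪((Tmul α hα) ^ k) f, ((Tmul α hα) ^ k) g⟫ = ⟪f, g⟫ := by
  induction k generalizing f g with
  | zero => simp
  | succ n ih =>
    have e : ∀ x : H2, ((Tmul α hα) ^ (n+1)) x = ((Tmul α hα) ^ n) (Tmul α hα x) := by
      intro x; rw [pow_succ, ContinuousLinearMap.mul_apply]
    rw [e, e, ih, inner_Tmul]

lemma Sop_Tmul_pow (k : ℕ) (f : H2) :
    Sop (((Tmul α hα) ^ k) f) = ((Tmul α hα) ^ k) (Sop f) := by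
  have := (commute_Sop_Tmul α hα).pow_right k
  have h2 := congrArg (fun X : H2 →L[ℂ] H2 => X f) this
  simpa only [ContinuousLinearMap.mul_apply] using h2

end Aux6
section Aux7
set_option maxHeartbeats 2000000
open Rudin

local notation "⟪" x ", " y "⟫" => @inner ℂ _ _ x y

variable (α : ℂ)

lemma mul_conj_self : α * conj α = ((‖α‖^2 : ℝ) : ℂ) := by
  rw [Complex.mul_conj]
  norm_cast
  rw [Complex.normSq_eq_norm_sq]

lemma norm_sq_lt_one (hα : ‖α‖ < 1) : ‖α‖^2 < 1 := by nlinarith [norm_nonneg α]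

lemma one_sub_normsq_ne (hα : ‖α‖ < 1) : ((1 - ‖α‖^2 : ℝ) : ℂ) ≠ 0 := by
  have h := norm_sq_lt_one α hα
  intro hc
  rw [Complex.ofReal_eq_zero] at hc
  linarith

variable (hα : ‖α‖ < 1)

/-- the element `h = S* b_α` -/
def hvec : H2 := Bop (blp α hα)

lemma hvec_coe (n : ℕ) : ((hvec α hα : H2) : ℕ → ℂ) n = (conj α)^n * ((1 - ‖α‖^2 : ℝ) : ℂ) := rfl

lemma summable_geo_c (hα : ‖α‖ < 1) (c : ℂ) : Summable (fun n : ℕ => c * ((‖α‖^2 : ℝ) : ℂ)^n) := by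
  apply Summable.mul_left
  apply summable_geometric_of_norm_lt_one
  rw [Complex.norm_real, Real.norm_eq_abs, abs_of_nonneg (by positivity)]
  exact norm_sq_lt_one α hα

lemma inner_Sop_hvec :
    ⟪Sop (hvec α hα), hvec α hα⟫ = conj α * ((1 - ‖α‖^2 : ℝ) : ℂ) := by
  set c : ℂ := ((1 - ‖α‖^2 : ℝ) : ℂ) with hc
  rw [lp.inner_eq_tsum]
  rw [Summable.tsum_eq_zero_add (lp.summable_inner (𝕜 := ℂ) (Sop (hvec α hα)) (hvec α hα))]
  have h0 : ((Sop (hvec α hα) : H2) : ℕ → ℂ) 0 = 0 := rfl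
  have hterm : ∀ n : ℕ, ⟪((Sop (hvec α hα) : H2) : ℕ → ℂ) (n+1), ((hvec α hα : H2) : ℕ → ℂ) (n+1)⟫
      = (c^2 * conj α) * ((‖α‖^2 : ℝ) : ℂ)^n := by
    intro n
    have h1 : ((Sop (hvec α hα) : H2) : ℕ → ℂ) (n+1) = ((hvec α hα : H2) : ℕ → ℂ) n := rfl
    rw [h1, hvec_coe, hvec_coe, RCLike.inner_apply]
    rw [map_mul, map_pow, Complex.conj_conj]
    have hcc : conj c = c := Complex.conj_ofReal _
    rw [hcc]
    have : α^n * ((conj α)^(n+1)) = conj α * (α * conj α)^n := by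
      rw [pow_succ, mul_pow]; ring
    calc (conj α)^(n+1) * c * (α ^ n * c) = (c^2 * conj α) * (α * conj α)^n := by
          rw [mul_pow]; ring
      _ = (c^2 * conj α) * ((‖α‖^2 : ℝ) : ℂ)^n := by rw [mul_conj_self]
  rw [h0]
  simp only [RCLike.inner_apply, map_zero, mul_zero, zero_add]
  have := tsum_congr (L := SummationFilter.unconditional ℕ) (f := fun n : ℕ => ((hvec α hα : H2) : ℕ → ℂ) (n+1) * conj (((Sop (hvec α hα) : H2) : ℕ → ℂ) (n+1)))
    (g := fun n : ℕ => (c^2 * conj α) * ((‖α‖^2 : ℝ) : ℂ)^n) (fun n => hterm n)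
  rw [this, tsum_mul_left, tsum_geometric_of_norm_lt_one
    (by rw [Complex.norm_real, Real.norm_eq_abs, abs_of_nonneg (by positivity)]; exact norm_sq_lt_one α hα)]
  have hinv : (1 - ((‖α‖^2 : ℝ) : ℂ)) = c := by rw [hc]; push_cast; ring
  rw [hinv]
  have hcne : c ≠ 0 := one_sub_normsq_ne α hα
  field_simp

lemma inner_hvec_self : ⟪(hvec α hα : H2), hvec α hα⟫ = ((1 - ‖α‖^2 : ℝ) : ℂ) := by
  set c : ℂ := ((1 - ‖α‖^2 : ℝ) : ℂ) with hc
  rw [lp.inner_eq_tsum]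
  have hterm : ∀ n : ℕ, ⟪((hvec α hα : H2) : ℕ → ℂ) n, ((hvec α hα : H2) : ℕ → ℂ) n⟫
      = (c^2) * ((‖α‖^2 : ℝ) : ℂ)^n := by
    intro n
    rw [hvec_coe, RCLike.inner_apply]
    rw [map_mul, map_pow, Complex.conj_conj, Complex.conj_ofReal]
    calc (conj α)^n * c * (α ^ n * c) = c^2 * (α * conj α)^n := by rw [mul_pow]; ring
      _ = c^2 * ((‖α‖^2 : ℝ) : ℂ)^n := by rw [mul_conj_self]
  rw [tsum_congr hterm, tsum_mul_left, tsum_geometric_of_norm_lt_one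
    (by rw [Complex.norm_real, Real.norm_eq_abs, abs_of_nonneg (by positivity)]; exact norm_sq_lt_one α hα)]
  have hinv : (1 - ((‖α‖^2 : ℝ) : ℂ)) = c := by rw [hc]; push_cast; ring
  rw [hinv]
  have hcne : c ≠ 0 := one_sub_normsq_ne α hα
  field_simp

end Aux7
open Rudin in
/-- For `α ∈ 𝔻` and `m ≥ 1`, with `g = b_α^{m-1} · (M_z* b_α)`, one has
`⟨g, M_z* g⟩ = conj α · (1-|α|²)`; equivalently, the orthogonal projection of `M_z* g`
onto the one-dimensional subspace `ℂ·g` equals `conj α • g`. -/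
theorem stmt9 (α : ℂ) (hα : α ∈ disc) (m : ℕ) (hm : 1 ≤ m)
    (Mz : H2 →L[ℂ] H2) (hMz : IsMulOp (fun z => z) Mz)
    (bα : H2) (hb : ∀ z ∈ disc, H2.eval bα z = blaschke α z)
    (g : H2)
    (hg : ∀ z ∈ disc,
      H2.eval g z = blaschke α z ^ (m - 1) * H2.eval (ContinuousLinearMap.adjoint Mz bα) z) :
    (inner ℂ g (ContinuousLinearMap.adjoint Mz g) : ℂ) = conj α * ((1 - ‖α‖ ^ 2 : ℝ) : ℂ) ∧
    (Submodule.orthogonalProjection (ℂ ∙ g) (ContinuousLinearMap.adjoint Mz g) : H2)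
      = conj α • g := by
  have hα' : ‖α‖ < 1 := mem_disc_iff.mp hα
  have hMzS : Mz = Sop := Mz_eq_Sop Mz hMz
  subst hMzS
  have hadj : ContinuousLinearMap.adjoint Sop = Bop := Bop_eq_adjoint_Sop.symm
  rw [hadj] at hg ⊢
  have hbα : bα = blp α hα' := by
    apply eval_inj
    intro z hz _
    rw [hb z hz, eval_blp α hα' (mem_disc_iff.mp hz)]
  have hBb : Bop bα = hvec α hα' := by rw [hbα]; rfl
  have hgT : g = ((Tmul α hα') ^ (m-1)) (hvec α hα') := by
    apply eval_inj
    intro z hz _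
    rw [hg z hz, eval_Tmul_pow α hα' (m-1) _ (mem_disc_iff.mp hz), hBb]
  have key : (inner ℂ g (Bop g) : ℂ) = conj α * ((1 - ‖α‖^2 : ℝ) : ℂ) := by
    rw [Bop_eq_adjoint_Sop, ContinuousLinearMap.adjoint_inner_right]
    rw [hgT, Sop_Tmul_pow α hα' (m-1), inner_Tmul_pow α hα' (m-1), inner_Sop_hvec α hα']
  have hgg : (inner ℂ g g : ℂ) = ((1 - ‖α‖^2 : ℝ) : ℂ) := by
    rw [hgT, inner_Tmul_pow α hα' (m-1), inner_hvec_self α hα']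
  refine ⟨key, ?_⟩
  have h1 : ‖g‖^2 = RCLike.re (inner ℂ g g : ℂ) := norm_sq_eq_re_inner (𝕜 := ℂ) g
  have hnr : ‖g‖^2 = 1 - ‖α‖^2 := by
    rw [h1, hgg]
    exact Complex.ofReal_re _
  rw [← Submodule.starProjection_apply, Submodule.starProjection_singleton, key, hnr]
  have hne := one_sub_normsq_ne α hα'
  congr 1
  rw [mul_div_assoc]
  have e : (RCLike.ofReal (1 - ‖α‖^2) : ℂ) = ((1 - ‖α‖^2 : ℝ) : ℂ) := rfl
  rw [e, div_self hne, mul_one]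
end
end
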